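/- arXiv:1404.0302 — 7 statements merged into one kernel-verified Lean document; each statement's English description precedes it below -/
import Mathlib

section
/- For μ > 0, x > 0, y ≥ 0, P_μ(x,y) = e^{-x} Σ_{n=0}^∞ (x^n/n!) P_{μ+n}(y), where P_ν(y) = γ(ν,y)/Γ(ν) is the regularized lower incomplete gamma function. -/
open Real MeasureTheory Set Filter

/-- Modified Bessel function of the first kind `I_ν(z)` (for positive real argument),
defined by its Maclaurin-type series. -/
noncomputable def besselI (ν z : ℝ) : ℝ :=
  ∑' n : ℕ, (z / 2) ^ (ν + 2 * (n : ℝ)) / ((Nat.factorial n : ℝ) * Real.Gamma (ν + (n : ℝ) + 1))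

/-- Generalized Marcum Q-function. -/
noncomputable def marcumQ (μ x y : ℝ) : ℝ :=
  x ^ ((1 - μ) / 2) *
    ∫ t in Set.Ioi y, t ^ ((μ - 1) / 2) * Real.exp (-t - x) * besselI (μ - 1) (2 * Real.sqrt (x * t))

/-- Complementary generalized Marcum P-function. -/
noncomputable def marcumP (μ x y : ℝ) : ℝ :=
  x ^ ((1 - μ) / 2) *
    ∫ t in Set.Ioc (0 : ℝ) y, t ^ ((μ - 1) / 2) * Real.exp (-t - x) * besselI (μ - 1) (2 * Real.sqrt (x * t))

/-- Lower incomplete gamma function `γ(ν, y)`. -/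
noncomputable def gammaLower (ν y : ℝ) : ℝ :=
  ∫ t in Set.Ioc (0 : ℝ) y, t ^ (ν - 1) * Real.exp (-t)

lemma gammaLower_integrableOn {ν : ℝ} (hν : 0 < ν) (y : ℝ) :
    IntegrableOn (fun t : ℝ => t ^ (ν - 1) * Real.exp (-t)) (Set.Ioc 0 y) := by
  have h := (Real.GammaIntegral_convergent hν).mono_set
    (Set.Ioc_subset_Ioi_self : Set.Ioc (0:ℝ) y ⊆ Set.Ioi 0)
  exact h.congr_fun (fun t _ => by ring) measurableSet_Ioc

lemma gammaLower_le_Gamma {ν : ℝ} (hν : 0 < ν) (y : ℝ) :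
    gammaLower ν y ≤ Real.Gamma ν := by
  rw [gammaLower, Real.Gamma_eq_integral hν]
  have h1 : ∀ t ∈ Set.Ioc (0:ℝ) y, t ^ (ν - 1) * Real.exp (-t) = Real.exp (-t) * t ^ (ν - 1) :=
    fun t _ => by ring
  rw [setIntegral_congr_fun measurableSet_Ioc h1]
  refine setIntegral_mono_set (Real.GammaIntegral_convergent hν) ?_ ?_
  · filter_upwards [ae_restrict_mem measurableSet_Ioi] with t ht
    exact mul_nonneg (Real.exp_nonneg _) (Real.rpow_nonneg (le_of_lt ht) _)
  · exact Filter.Eventually.of_forall Set.Ioc_subset_Ioi_self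

lemma gammaLower_nonneg {ν : ℝ} (y : ℝ) : 0 ≤ gammaLower ν y := by
  apply setIntegral_nonneg measurableSet_Ioc
  intro t ht
  exact mul_nonneg (Real.rpow_nonneg (le_of_lt ht.1) _) (Real.exp_nonneg _)

theorem marcumP_series (μ x y : ℝ) (hμ : 0 < μ) (hx : 0 < x) (hy : 0 ≤ y) :
    marcumP μ x y =
      Real.exp (-x) *
        ∑' n : ℕ, x ^ n / (Nat.factorial n : ℝ) * (gammaLower (μ + n) y / Real.Gamma (μ + n)) := by
  set c : ℕ → ℝ := fun n =>
    Real.exp (-x) * x ^ ((μ - 1) / 2 + n) / ((Nat.factorial n : ℝ) * Real.Gamma (μ + n)) with hc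
  set g : ℕ → ℝ → ℝ := fun n t => c n * (t ^ (μ + n - 1) * Real.exp (-t)) with hg
  have hΓpos : ∀ n : ℕ, 0 < Real.Gamma (μ + n) := fun n =>
    Real.Gamma_pos_of_pos (by positivity)
  have hcn : ∀ n, 0 ≤ c n := by
    intro n
    apply div_nonneg
    · exact mul_nonneg (Real.exp_nonneg _) (Real.rpow_nonneg hx.le _)
    · exact mul_nonneg (Nat.cast_nonneg _) (hΓpos n).le
  have hμn : ∀ n : ℕ, 0 < μ + n := fun n => by positivity
  -- pointwise identity on (0, y]
  have hpt : ∀ t ∈ Set.Ioc (0:ℝ) y,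
      t ^ ((μ - 1) / 2) * Real.exp (-t - x) * besselI (μ - 1) (2 * Real.sqrt (x * t))
        = ∑' n : ℕ, g n t := by
    intro t ht
    have hxt : 0 < x * t := mul_pos hx ht.1
    rw [besselI]
    have hterm : ∀ n : ℕ,
        (2 * Real.sqrt (x * t) / 2) ^ (μ - 1 + 2 * (n : ℝ)) /
            ((Nat.factorial n : ℝ) * Real.Gamma (μ - 1 + (n : ℝ) + 1))
          = x ^ ((μ - 1) / 2 + n) * t ^ ((μ - 1) / 2 + n) /
            ((Nat.factorial n : ℝ) * Real.Gamma (μ + n)) := by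
      intro n
      have h2 : 2 * Real.sqrt (x * t) / 2 = Real.sqrt (x * t) := by ring
      have h3 : (Real.sqrt (x * t)) ^ (μ - 1 + 2 * (n : ℝ))
          = x ^ ((μ - 1) / 2 + n) * t ^ ((μ - 1) / 2 + n) := by
        rw [Real.sqrt_eq_rpow, ← Real.rpow_mul hxt.le,
          show (1:ℝ)/2 * (μ - 1 + 2 * (n:ℝ)) = (μ - 1)/2 + n by ring,
          Real.mul_rpow hx.le ht.1.le]
      have h4 : μ - 1 + (n : ℝ) + 1 = μ + n := by ring
      rw [h2, h3, h4]
    rw [tsum_congr hterm, ← tsum_mul_left]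
    refine tsum_congr fun n => ?_
    have h5 : t ^ ((μ - 1) / 2) * t ^ ((μ - 1) / 2 + (n:ℝ)) = t ^ (μ + n - 1) := by
      rw [← Real.rpow_add ht.1, show (μ - 1)/2 + ((μ - 1)/2 + (n:ℝ)) = μ + n - 1 by ring]
    have h6 : Real.exp (-t - x) = Real.exp (-x) * Real.exp (-t) := by
      rw [← Real.exp_add]; ring_nf
    rw [hg, hc]
    field_simp
    rw [← h5, h6]
    ring
  -- measurability
  have hmeas : ∀ n : ℕ, AEStronglyMeasurable (g n) (volume.restrict (Set.Ioc (0:ℝ) y)) := by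
    intro n
    refine ContinuousOn.aestronglyMeasurable ?_ measurableSet_Ioc
    exact continuousOn_const.mul
      ((continuousOn_id.rpow_const fun t ht => Or.inl (ne_of_gt ht.1)).mul
        (Real.continuous_exp.comp continuous_neg).continuousOn)
  -- integrability and nonnegativity of each g n
  have hgint : ∀ n : ℕ, IntegrableOn (g n) (Set.Ioc (0:ℝ) y) := fun n =>
    (gammaLower_integrableOn (hμn n) y).const_mul _
  have hgnn : ∀ n : ℕ, 0 ≤ᵐ[volume.restrict (Set.Ioc (0:ℝ) y)] g n := by
    intro n
    filter_upwards [ae_restrict_mem measurableSet_Ioc] with t ht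
    exact mul_nonneg (hcn n) (mul_nonneg (Real.rpow_nonneg ht.1.le _) (Real.exp_nonneg _))
  -- the value of each integral
  have hgval : ∀ n : ℕ, ∫ t in Set.Ioc (0:ℝ) y, g n t = c n * gammaLower (μ + n) y := by
    intro n
    rw [hg]
    simp only []
    rw [integral_const_mul]
    rfl
  -- summability of the bounding series
  have hbsum : Summable (fun n : ℕ => c n * Real.Gamma (μ + n)) := by
    have : ∀ n : ℕ, c n * Real.Gamma (μ + n)
        = (Real.exp (-x) * x ^ ((μ - 1)/2)) * (x ^ n / (Nat.factorial n : ℝ)) := by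
      intro n
      have h1 : x ^ ((μ - 1)/2 + (n:ℝ)) = x ^ ((μ-1)/2) * x ^ n := by
        rw [Real.rpow_add hx, Real.rpow_natCast]
      rw [hc]
      simp only [h1]
      field_simp
    rw [funext this]
    exact (Real.summable_pow_div_factorial x).mul_left _
  -- the series of integrals of |g n| is finite
  have hfin : ∑' n : ℕ, ∫⁻ t in Set.Ioc (0:ℝ) y, ‖g n t‖₊ ≠ ⊤ := by
    have heq : ∀ n : ℕ, ∫⁻ t in Set.Ioc (0:ℝ) y, (‖g n t‖₊ : ENNReal)
        = ENNReal.ofReal (∫ t in Set.Ioc (0:ℝ) y, g n t) := by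
      intro n
      rw [MeasureTheory.ofReal_integral_eq_lintegral_ofReal (hgint n) (hgnn n)]
      apply lintegral_congr_ae
      filter_upwards [hgnn n] with t ht
      exact Real.enorm_eq_ofReal ht
    rw [tsum_congr heq]
    have hle : ∀ n : ℕ, ENNReal.ofReal (∫ t in Set.Ioc (0:ℝ) y, g n t)
        ≤ ENNReal.ofReal (c n * Real.Gamma (μ + n)) := by
      intro n
      apply ENNReal.ofReal_le_ofReal
      rw [hgval n]
      exact mul_le_mul_of_nonneg_left (gammaLower_le_Gamma (hμn n) y) (hcn n)
    refine ne_top_of_le_ne_top ?_ (ENNReal.tsum_le_tsum hle)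
    rw [← ENNReal.ofReal_tsum_of_nonneg
      (fun n => mul_nonneg (hcn n) (hΓpos n).le) hbsum]
    exact ENNReal.ofReal_ne_top
  -- interchange integral and sum
  have key : (∫ t in Set.Ioc (0:ℝ) y,
      t ^ ((μ - 1) / 2) * Real.exp (-t - x) * besselI (μ - 1) (2 * Real.sqrt (x * t)))
      = ∑' n : ℕ, c n * gammaLower (μ + n) y := by
    rw [setIntegral_congr_fun measurableSet_Ioc hpt, integral_tsum hmeas hfin]
    exact tsum_congr hgval
  rw [marcumP, key, ← tsum_mul_left, ← tsum_mul_left]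
  refine tsum_congr fun n => ?_
  have hxx : x ^ ((1 - μ)/2) * x ^ ((μ - 1)/2 + (n:ℝ)) = x ^ n := by
    rw [← Real.rpow_add hx, show (1 - μ)/2 + ((μ - 1)/2 + (n:ℝ)) = (n:ℝ) by ring,
      Real.rpow_natCast]
  rw [hc]
  have e1 : x ^ ((1 - μ)/2) *
      (Real.exp (-x) * x ^ ((μ - 1)/2 + (n:ℝ)) / ((Nat.factorial n : ℝ) * Real.Gamma (μ + n)) *
        gammaLower (μ + n) y)
      = (x ^ ((1 - μ)/2) * x ^ ((μ - 1)/2 + (n:ℝ))) *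
        (Real.exp (-x) / ((Nat.factorial n : ℝ) * Real.Gamma (μ + n)) * gammaLower (μ + n) y) := by
    ring
  rw [e1, hxx]
  field_simp
end

section
/- For μ > 0, x > 0, y > 0, ∂Q_μ(x,y)/∂x = (y/x)^{μ/2} e^{-x-y} I_μ(2√(xy)), and consequently Q_μ(x,y) is strictly increasing in x. -/
open Real MeasureTheory Set Filter

noncomputable def IG (y s : ℝ) : ℝ := ∫ t in Set.Ioi y, Real.exp (-t) * t ^ (s - 1)

lemma ig_integrableOn {y s : ℝ} (hy : 0 < y) (hs : 0 < s) :
    IntegrableOn (fun t : ℝ => Real.exp (-t) * t ^ (s - 1)) (Set.Ioi y) :=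
  (Real.GammaIntegral_convergent hs).mono_set (Set.Ioi_subset_Ioi hy.le)

lemma ig_pos {y s : ℝ} (hy : 0 < y) (hs : 0 < s) : 0 < IG y s := by
  have h : ∀ t ∈ Set.Ioi y, 0 < Real.exp (-t) * t ^ (s - 1) := by
    intro t ht
    exact mul_pos (Real.exp_pos _) (Real.rpow_pos_of_pos (hy.trans ht) _)
  have hnn : 0 ≤ᵐ[volume.restrict (Set.Ioi y)] fun t : ℝ => Real.exp (-t) * t ^ (s - 1) := by
    filter_upwards [ae_restrict_mem measurableSet_Ioi] with t ht using (h t ht).le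
  refine (setIntegral_pos_iff_support_of_nonneg_ae hnn (ig_integrableOn hy hs)).2 ?_
  have hsub : Set.Ioi y ⊆ Function.support (fun t : ℝ => Real.exp (-t) * t ^ (s - 1)) ∩ Set.Ioi y :=
    fun t ht => ⟨ne_of_gt (h t ht), ht⟩
  calc (0:ENNReal) < volume (Set.Ioi y) := by simp
    _ ≤ _ := measure_mono hsub

lemma ig_le_Gamma {y s : ℝ} (hy : 0 < y) (hs : 0 < s) : IG y s ≤ Real.Gamma s := by
  rw [Real.Gamma_eq_integral hs]
  apply setIntegral_mono_set (Real.GammaIntegral_convergent hs)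
  · filter_upwards [ae_restrict_mem measurableSet_Ioi] with t ht
    exact mul_nonneg (Real.exp_pos _).le (Real.rpow_nonneg (le_of_lt ht) _)
  · exact HasSubset.Subset.eventuallyLE (Set.Ioi_subset_Ioi hy.le)

lemma ig_rec {y s : ℝ} (hy : 0 < y) (hs : 0 < s) :
    IG y (s + 1) = s * IG y s + y ^ s * Real.exp (-y) := by
  have hderiv : ∀ t ∈ Set.Ici y, HasDerivAt (fun t : ℝ => -(t ^ s * Real.exp (-t)))
      (Real.exp (-t) * t ^ (s + 1 - 1) - s * (Real.exp (-t) * t ^ (s - 1))) t := by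
    intro t ht
    have h1 : HasDerivAt (fun t : ℝ => t ^ s) (s * t ^ (s - 1)) t :=
      Real.hasDerivAt_rpow_const (Or.inl (ne_of_gt (hy.trans_le ht)))
    have h2 : HasDerivAt (fun t : ℝ => Real.exp (-t)) (-Real.exp (-t)) t := by
      simpa using (hasDerivAt_neg t).exp
    have := (h1.mul h2).neg
    refine HasDerivAt.congr_deriv this ?_
    have : t ^ (s + 1 - 1) = t ^ s := by norm_num
    rw [this]
    ring
  have hint : IntegrableOn (fun t : ℝ =>
      Real.exp (-t) * t ^ (s + 1 - 1) - s * (Real.exp (-t) * t ^ (s - 1))) (Set.Ioi y) :=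
    (ig_integrableOn hy (by linarith)).sub ((ig_integrableOn hy hs).const_mul s)
  have htend : Tendsto (fun t : ℝ => -(t ^ s * Real.exp (-t))) atTop (nhds 0) := by
    rw [show (0:ℝ) = -0 by norm_num]
    apply Filter.Tendsto.neg
    have := tendsto_rpow_mul_exp_neg_mul_atTop_nhds_zero s 1 one_pos
    simpa using this
  have := MeasureTheory.integral_Ioi_of_hasDerivAt_of_tendsto' hderiv hint htend
  rw [MeasureTheory.integral_sub (ig_integrableOn hy (by linarith))
    ((ig_integrableOn hy hs).const_mul s), MeasureTheory.integral_const_mul] at this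
  have h0 : (0:ℝ) - -(y ^ s * Real.exp (-y)) = y ^ s * Real.exp (-y) := by ring
  rw [h0] at this
  rw [IG, IG]
  linarith [this]


lemma term_eq {μ x t : ℝ} (hx : 0 < x) (ht : 0 < t) (n : ℕ) :
    x ^ ((1 - μ) / 2) * ((t ^ ((μ - 1) / 2) * Real.exp (-t - x)) *
      ((2 * Real.sqrt (x * t) / 2) ^ (μ - 1 + 2 * (n : ℝ)) /
        ((Nat.factorial n : ℝ) * Real.Gamma (μ - 1 + (n : ℝ) + 1)))) =
    Real.exp (-x) * x ^ n / ((Nat.factorial n : ℝ) * Real.Gamma (μ + (n : ℝ))) *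
      (Real.exp (-t) * t ^ (μ + (n : ℝ) - 1)) := by
  have hxt : (0:ℝ) ≤ x * t := le_of_lt (mul_pos hx ht)
  have h2 : 2 * Real.sqrt (x * t) / 2 = Real.sqrt (x * t) := by ring
  have hγ : μ - 1 + (n : ℝ) + 1 = μ + (n : ℝ) := by ring
  have hpow : Real.sqrt (x * t) ^ (μ - 1 + 2 * (n : ℝ)) =
      x ^ ((μ - 1) / 2 + (n : ℝ)) * t ^ ((μ - 1) / 2 + (n : ℝ)) := by
    rw [Real.sqrt_eq_rpow, ← Real.rpow_mul hxt,
      show (1/2:ℝ) * (μ - 1 + 2 * (n:ℝ)) = (μ - 1) / 2 + (n:ℝ) by ring,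
      Real.mul_rpow hx.le ht.le]
  rw [h2, hγ, hpow]
  have hxc : x ^ ((1 - μ) / 2) * x ^ ((μ - 1) / 2 + (n : ℝ)) = x ^ n := by
    rw [← Real.rpow_natCast x n, ← Real.rpow_add hx]
    congr 1; ring
  have htc : t ^ ((μ - 1) / 2) * t ^ ((μ - 1) / 2 + (n : ℝ)) = t ^ (μ + (n : ℝ) - 1) := by
    rw [← Real.rpow_add ht]
    ring_nf
  have hexp : Real.exp (-t - x) = Real.exp (-t) * Real.exp (-x) := by
    rw [← Real.exp_add]; ring_nf
  rw [hexp]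
  calc x ^ ((1 - μ) / 2) * ((t ^ ((μ - 1) / 2) * (Real.exp (-t) * Real.exp (-x))) *
        ((x ^ ((μ - 1) / 2 + (n : ℝ)) * t ^ ((μ - 1) / 2 + (n : ℝ))) /
          ((Nat.factorial n : ℝ) * Real.Gamma (μ + (n : ℝ)))))
      = (x ^ ((1 - μ) / 2) * x ^ ((μ - 1) / 2 + (n : ℝ))) *
        (t ^ ((μ - 1) / 2) * t ^ ((μ - 1) / 2 + (n : ℝ))) * Real.exp (-t) * Real.exp (-x) /
          ((Nat.factorial n : ℝ) * Real.Gamma (μ + (n : ℝ))) := by ring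
    _ = x ^ n * t ^ (μ + (n : ℝ) - 1) * Real.exp (-t) * Real.exp (-x) /
          ((Nat.factorial n : ℝ) * Real.Gamma (μ + (n : ℝ))) := by rw [hxc, htc]
    _ = _ := by ring


noncomputable def mcoef (μ y : ℝ) (n : ℕ) : ℝ :=
  IG y (μ + (n : ℝ)) / ((Nat.factorial n : ℝ) * Real.Gamma (μ + (n : ℝ)))

lemma mgam_pos {μ : ℝ} (hμ : 0 < μ) (n : ℕ) : 0 < Real.Gamma (μ + (n : ℝ)) :=
  Real.Gamma_pos_of_pos (by positivity)

lemma mcoef_pos {μ y : ℝ} (hμ : 0 < μ) (hy : 0 < y) (n : ℕ) : 0 < mcoef μ y n :=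
  div_pos (ig_pos hy (by positivity)) (mul_pos (by positivity) (mgam_pos hμ n))

lemma mcoef_le {μ y : ℝ} (hμ : 0 < μ) (hy : 0 < y) (n : ℕ) :
    mcoef μ y n ≤ 1 / (Nat.factorial n : ℝ) := by
  rw [mcoef, div_le_div_iff₀ (mul_pos (by positivity) (mgam_pos hμ n)) (by positivity)]
  have := ig_le_Gamma hy (show (0:ℝ) < μ + n by positivity)
  have h2 := (mgam_pos hμ n).le
  have h3 : (0:ℝ) < (Nat.factorial n : ℝ) := by positivity
  nlinarith

lemma mcoef_rec {μ y : ℝ} (hμ : 0 < μ) (hy : 0 < y) (m : ℕ) :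
    ((m : ℝ) + 1) * mcoef μ y (m + 1) - mcoef μ y m =
      y ^ (μ + (m : ℝ)) * Real.exp (-y) /
        ((Nat.factorial m : ℝ) * Real.Gamma (μ + (m : ℝ) + 1)) := by
  have hs : (0:ℝ) < μ + m := by positivity
  have hrec := ig_rec hy hs
  have hΓ : Real.Gamma (μ + (m:ℝ) + 1) = (μ + m) * Real.Gamma (μ + m) :=
    Real.Gamma_add_one (ne_of_gt hs)
  have hcast : μ + ((m:ℕ)+1 : ℕ) = μ + (m:ℝ) + 1 := by push_cast; ring
  rw [mcoef, mcoef, hcast, hrec, hΓ, Nat.factorial_succ]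
  have hne1 : (Nat.factorial m : ℝ) ≠ 0 := by positivity
  have hne2 : Real.Gamma (μ + (m:ℝ)) ≠ 0 := ne_of_gt (mgam_pos hμ m)
  have hne3 : (μ + (m:ℝ)) ≠ 0 := ne_of_gt hs
  have hne4 : ((m:ℝ) + 1) ≠ 0 := by positivity
  field_simp
  push_cast
  ring

lemma summable_aux (B : ℝ) : Summable (fun n : ℕ => ((n:ℝ) + 1) * B ^ n / (Nat.factorial n : ℝ)) := by
  have h1 : Summable (fun n : ℕ => B ^ n / (Nat.factorial n : ℝ)) :=
    Real.summable_pow_div_factorial B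
  have h2 : Summable (fun n : ℕ => (n:ℝ) * B ^ n / (Nat.factorial n : ℝ)) := by
    rw [← summable_nat_add_iff 1]
    have : (fun n : ℕ => ((n:ℕ)+1 : ℝ) * B ^ (n+1) / (Nat.factorial (n+1) : ℝ)) =
        fun n : ℕ => B * (B ^ n / (Nat.factorial n : ℝ)) := by
      funext n
      rw [Nat.factorial_succ]
      push_cast
      have hne : ((n:ℝ)+1) ≠ 0 := by positivity
      have hne2 : (Nat.factorial n : ℝ) ≠ 0 := by positivity
      field_simp
      ring
    simpa [this] using (h1.mul_left B)
  have := h2.add h1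
  apply this.congr
  intro n
  field_simp


lemma summable_g {μ y : ℝ} (hμ : 0 < μ) (hy : 0 < y) {x : ℝ} (hx : 0 ≤ x) :
    Summable (fun n : ℕ => mcoef μ y n * (Real.exp (-x) * x ^ n)) := by
  apply Summable.of_nonneg_of_le
    (fun n => mul_nonneg (mcoef_pos hμ hy n).le (by positivity))
    (fun n => ?_) (Real.summable_pow_div_factorial x)
  calc mcoef μ y n * (Real.exp (-x) * x ^ n)
      ≤ 1 / (Nat.factorial n : ℝ) * (1 * x ^ n) := by
        apply mul_le_mul (mcoef_le hμ hy n) ?_ (by positivity) (by positivity)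
        exact mul_le_mul_of_nonneg_right (Real.exp_le_one_iff.2 (by linarith)) (by positivity)
    _ = x ^ n / (Nat.factorial n : ℝ) := by ring

lemma marcumQ_eq {μ y : ℝ} (hμ : 0 < μ) (hy : 0 < y) {x : ℝ} (hx : 0 < x) :
    marcumQ μ x y = ∑' n : ℕ, mcoef μ y n * (Real.exp (-x) * x ^ n) := by
  have hint : ∀ n : ℕ, IntegrableOn (fun t : ℝ =>
      Real.exp (-x) * x ^ n / ((Nat.factorial n : ℝ) * Real.Gamma (μ + (n : ℝ))) *
        (Real.exp (-t) * t ^ (μ + (n : ℝ) - 1))) (Set.Ioi y) := by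
    intro n
    exact (ig_integrableOn hy (show (0:ℝ) < μ + n by positivity)).const_mul _
  have hval : ∀ n : ℕ, (∫ t in Set.Ioi y,
      Real.exp (-x) * x ^ n / ((Nat.factorial n : ℝ) * Real.Gamma (μ + (n : ℝ))) *
        (Real.exp (-t) * t ^ (μ + (n : ℝ) - 1))) = mcoef μ y n * (Real.exp (-x) * x ^ n) := by
    intro n
    rw [MeasureTheory.integral_const_mul, mcoef, IG]
    ring
  rw [marcumQ, ← MeasureTheory.integral_const_mul]
  rw [show (∫ t in Set.Ioi y, x ^ ((1 - μ) / 2) *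
      (t ^ ((μ - 1) / 2) * Real.exp (-t - x) * besselI (μ - 1) (2 * Real.sqrt (x * t)))) =
    ∫ t in Set.Ioi y, ∑' n : ℕ,
      Real.exp (-x) * x ^ n / ((Nat.factorial n : ℝ) * Real.Gamma (μ + (n : ℝ))) *
        (Real.exp (-t) * t ^ (μ + (n : ℝ) - 1)) from ?_]
  · rw [MeasureTheory.integral_tsum (fun n => (hint n).aestronglyMeasurable) ?_]
    · exact tsum_congr hval
    · have hsum : Summable (fun n : ℕ => mcoef μ y n * (Real.exp (-x) * x ^ n)) :=
        summable_g hμ hy hx.le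
      have heach : ∀ n : ℕ, (∫⁻ t in Set.Ioi y, ‖Real.exp (-x) * x ^ n /
          ((Nat.factorial n : ℝ) * Real.Gamma (μ + (n : ℝ))) *
          (Real.exp (-t) * t ^ (μ + (n : ℝ) - 1))‖ₑ) =
          ENNReal.ofReal (mcoef μ y n * (Real.exp (-x) * x ^ n)) := by
        intro n
        rw [← MeasureTheory.ofReal_integral_norm_eq_lintegral_enorm (hint n)]
        congr 1
        rw [← hval n]
        apply MeasureTheory.setIntegral_congr_fun measurableSet_Ioi
        intro t ht
        have ht0 : 0 < t := hy.trans ht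
        simp only [Real.norm_eq_abs]
        rw [abs_of_nonneg]
        have h1 : (0:ℝ) < Real.Gamma (μ + (n:ℝ)) := mgam_pos hμ n
        have h2 : (0:ℝ) < t ^ (μ + (n:ℝ) - 1) := Real.rpow_pos_of_pos ht0 _
        positivity
      simp_rw [heach]
      rw [← ENNReal.ofReal_tsum_of_nonneg (fun n => mul_nonneg (mcoef_pos hμ hy n).le (by positivity)) hsum]
      exact ENNReal.ofReal_ne_top
  · apply MeasureTheory.setIntegral_congr_fun measurableSet_Ioi
    intro t ht
    have ht0 : 0 < t := hy.trans ht
    simp only [besselI]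
    rw [← tsum_mul_left, ← tsum_mul_left]
    exact tsum_congr (fun n => by rw [← term_eq hx ht0 n])


lemma hasDerivAt_g (c : ℝ) (n : ℕ) (x : ℝ) :
    HasDerivAt (fun x' : ℝ => c * (Real.exp (-x') * x' ^ n))
      (c * (-Real.exp (-x) * x ^ n + Real.exp (-x) * ((n:ℝ) * x ^ (n - 1)))) x := by
  have hexp : HasDerivAt (fun x' : ℝ => Real.exp (-x')) (-Real.exp (-x)) x := by
    simpa using (hasDerivAt_neg x).exp
  exact (hexp.mul (hasDerivAt_pow n x)).const_mul c

lemma g'_bound {μ y : ℝ} (hμ : 0 < μ) (hy : 0 < y) {R : ℝ} (hR : 1 < R) (n : ℕ) {x : ℝ}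
    (hx : x ∈ Set.Ioo (0:ℝ) R) :
    ‖mcoef μ y n * (-Real.exp (-x) * x ^ n + Real.exp (-x) * ((n:ℝ) * x ^ (n - 1)))‖ ≤
      ((n:ℝ) + 1) * R ^ n / (Nat.factorial n : ℝ) := by
  obtain ⟨hx0, hxR⟩ := hx
  have he : Real.exp (-x) ≤ 1 := Real.exp_le_one_iff.2 (by linarith)
  have he0 : 0 < Real.exp (-x) := Real.exp_pos _
  have hxn : x ^ n ≤ R ^ n := pow_le_pow_left₀ hx0.le hxR.le n
  have hxn1 : x ^ (n-1) ≤ R ^ n := by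
    calc x ^ (n-1) ≤ R ^ (n-1) := pow_le_pow_left₀ hx0.le hxR.le _
      _ ≤ R ^ n := pow_le_pow_right₀ hR.le (Nat.sub_le n 1)
  rw [norm_mul, Real.norm_eq_abs, Real.norm_eq_abs,
    abs_of_pos (mcoef_pos hμ hy n)]
  calc mcoef μ y n * |(-Real.exp (-x) * x ^ n + Real.exp (-x) * ((n:ℝ) * x ^ (n - 1)))|
      ≤ (1 / (Nat.factorial n : ℝ)) * (R ^ n + (n:ℝ) * R ^ n) := by
        apply mul_le_mul (mcoef_le hμ hy n) ?_ (abs_nonneg _) (by positivity)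
        calc |(-Real.exp (-x) * x ^ n + Real.exp (-x) * ((n:ℝ) * x ^ (n - 1)))|
            ≤ |(-Real.exp (-x) * x ^ n)| + |Real.exp (-x) * ((n:ℝ) * x ^ (n - 1))| := abs_add_le _ _
          _ ≤ R ^ n + (n:ℝ) * R ^ n := by
              apply add_le_add
              · rw [abs_of_nonpos (by nlinarith [pow_nonneg hx0.le n]), neg_mul, neg_neg]
                nlinarith [pow_nonneg hx0.le n]
              · rw [abs_of_nonneg (by positivity)]
                have hn0 : (0:ℝ) ≤ (n:ℝ) := Nat.cast_nonneg n
                have h1 : (n:ℝ) * x ^ (n-1) ≤ (n:ℝ) * R ^ n :=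
                  mul_le_mul_of_nonneg_left hxn1 hn0
                nlinarith [mul_nonneg hn0 (pow_nonneg hx0.le (n-1))]
    _ = ((n:ℝ) + 1) * R ^ n / (Nat.factorial n : ℝ) := by ring


lemma hasDerivAt_sumg {μ y : ℝ} (hμ : 0 < μ) (hy : 0 < y) {x : ℝ} (hx : 0 < x) :
    HasDerivAt (fun x' : ℝ => ∑' n : ℕ, mcoef μ y n * (Real.exp (-x') * x' ^ n))
      (∑' n : ℕ, mcoef μ y n *
        (-Real.exp (-x) * x ^ n + Real.exp (-x) * ((n:ℝ) * x ^ (n - 1)))) x := by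
  have hR : (1:ℝ) < x + 2 := by linarith
  have hmem : x ∈ Set.Ioo (0:ℝ) (x+2) := ⟨hx, by linarith⟩
  exact hasDerivAt_tsum_of_isPreconnected (summable_aux (x+2)) isOpen_Ioo
    (convex_Ioo _ _).isPreconnected
    (fun n x' _ => hasDerivAt_g (mcoef μ y n) n x')
    (fun n x' hx' => g'_bound hμ hy hR n hx')
    hmem (summable_g hμ hy hx.le) hmem

lemma summable_g' {μ y : ℝ} (hμ : 0 < μ) (hy : 0 < y) {x : ℝ} (hx : 0 < x) :
    Summable (fun n : ℕ => mcoef μ y n *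
      (-Real.exp (-x) * x ^ n + Real.exp (-x) * ((n:ℝ) * x ^ (n - 1)))) := by
  have hR : (1:ℝ) < x + 2 := by linarith
  have hmem : x ∈ Set.Ioo (0:ℝ) (x+2) := ⟨hx, by linarith⟩
  exact Summable.of_norm_bounded (summable_aux (x+2)) (fun n => g'_bound hμ hy hR n hmem)

lemma sum_g'_eq {μ y : ℝ} (hμ : 0 < μ) (hy : 0 < y) {x : ℝ} (hx : 0 < x) :
    (∑' n : ℕ, mcoef μ y n *
      (-Real.exp (-x) * x ^ n + Real.exp (-x) * ((n:ℝ) * x ^ (n - 1)))) =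
    ∑' n : ℕ, Real.exp (-x) * Real.exp (-y) * (y ^ (μ + (n:ℝ)) * x ^ n /
      ((Nat.factorial n : ℝ) * Real.Gamma (μ + (n:ℝ) + 1))) := by
  have he : Summable (fun n : ℕ => mcoef μ y n * (Real.exp (-x) * x ^ n)) :=
    summable_g hμ hy hx.le
  have hg' := summable_g' hμ hy (y := y) hx
  have hd : Summable (fun n : ℕ => mcoef μ y n * (Real.exp (-x) * ((n:ℝ) * x ^ (n - 1)))) := by
    apply (hg'.add he).congr
    intro n; ring
  have hshift : Summable (fun n : ℕ =>
      mcoef μ y (n+1) * (Real.exp (-x) * (((n+1:ℕ):ℝ) * x ^ ((n+1) - 1)))) :=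
    (summable_nat_add_iff 1).2 hd
  calc (∑' n : ℕ, mcoef μ y n *
        (-Real.exp (-x) * x ^ n + Real.exp (-x) * ((n:ℝ) * x ^ (n - 1))))
      = ∑' n : ℕ, (mcoef μ y n * (Real.exp (-x) * ((n:ℝ) * x ^ (n - 1))) -
          mcoef μ y n * (Real.exp (-x) * x ^ n)) := tsum_congr (fun n => by ring)
    _ = (∑' n : ℕ, mcoef μ y n * (Real.exp (-x) * ((n:ℝ) * x ^ (n - 1)))) -
          ∑' n : ℕ, mcoef μ y n * (Real.exp (-x) * x ^ n) := Summable.tsum_sub hd he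
    _ = (∑' n : ℕ, mcoef μ y (n+1) * (Real.exp (-x) * (((n+1:ℕ):ℝ) * x ^ ((n+1) - 1)))) -
          ∑' n : ℕ, mcoef μ y n * (Real.exp (-x) * x ^ n) := by
        rw [Summable.tsum_eq_zero_add hd]
        simp
    _ = ∑' n : ℕ, (mcoef μ y (n+1) * (Real.exp (-x) * (((n+1:ℕ):ℝ) * x ^ ((n+1) - 1))) -
          mcoef μ y n * (Real.exp (-x) * x ^ n)) := (Summable.tsum_sub hshift he).symm
    _ = _ := by
        apply tsum_congr
        intro n
        have hn1 : (n + 1) - 1 = n := by omega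
        rw [hn1]
        push_cast
        linear_combination (Real.exp (-x) * x ^ n) * mcoef_rec hμ hy n

lemma term2_eq {μ x y : ℝ} (hx : 0 < x) (hy : 0 < y) (n : ℕ) :
    (y / x) ^ (μ / 2) * Real.exp (-x - y) *
      ((2 * Real.sqrt (x * y) / 2) ^ (μ + 2 * (n:ℝ)) /
        ((Nat.factorial n : ℝ) * Real.Gamma (μ + (n:ℝ) + 1))) =
    Real.exp (-x) * Real.exp (-y) * (y ^ (μ + (n:ℝ)) * x ^ n /
      ((Nat.factorial n : ℝ) * Real.Gamma (μ + (n:ℝ) + 1))) := by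
  have hxy : (0:ℝ) ≤ x * y := le_of_lt (mul_pos hx hy)
  have h2 : 2 * Real.sqrt (x * y) / 2 = Real.sqrt (x * y) := by ring
  have hpow : Real.sqrt (x * y) ^ (μ + 2 * (n : ℝ)) =
      x ^ (μ / 2 + (n : ℝ)) * y ^ (μ / 2 + (n : ℝ)) := by
    rw [Real.sqrt_eq_rpow, ← Real.rpow_mul hxy,
      show (1/2:ℝ) * (μ + 2 * (n:ℝ)) = μ / 2 + (n:ℝ) by ring,
      Real.mul_rpow hx.le hy.le]
  have hexp : Real.exp (-x - y) = Real.exp (-x) * Real.exp (-y) := by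
    rw [← Real.exp_add]; ring_nf
  have hxne : x ^ (μ/2 : ℝ) ≠ 0 := ne_of_gt (Real.rpow_pos_of_pos hx _)
  have hkey : (y / x) ^ (μ / 2) * (x ^ (μ / 2 + (n:ℝ)) * y ^ (μ / 2 + (n:ℝ))) =
      y ^ (μ + (n:ℝ)) * x ^ n := by
    rw [Real.div_rpow hy.le hx.le, Real.rpow_add hx (μ/2) (n:ℝ), Real.rpow_natCast x n,
      show μ + (n:ℝ) = μ/2 + (μ/2 + (n:ℝ)) by ring, Real.rpow_add hy (μ/2) (μ/2 + (n:ℝ))]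
    field_simp
  rw [h2, hpow, hexp]
  calc (y / x) ^ (μ / 2) * (Real.exp (-x) * Real.exp (-y)) *
        (x ^ (μ / 2 + (n:ℝ)) * y ^ (μ / 2 + (n:ℝ)) /
          ((Nat.factorial n : ℝ) * Real.Gamma (μ + (n:ℝ) + 1)))
      = Real.exp (-x) * Real.exp (-y) *
        ((y / x) ^ (μ / 2) * (x ^ (μ / 2 + (n:ℝ)) * y ^ (μ / 2 + (n:ℝ)))) /
          ((Nat.factorial n : ℝ) * Real.Gamma (μ + (n:ℝ) + 1)) := by ring
    _ = Real.exp (-x) * Real.exp (-y) * (y ^ (μ + (n:ℝ)) * x ^ n) /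
          ((Nat.factorial n : ℝ) * Real.Gamma (μ + (n:ℝ) + 1)) := by rw [hkey]
    _ = _ := by ring

lemma summable_F {μ y : ℝ} (hμ : 0 < μ) (hy : 0 < y) {x : ℝ} (hx : 0 < x) :
    Summable (fun n : ℕ => Real.exp (-x) * Real.exp (-y) * (y ^ (μ + (n:ℝ)) * x ^ n /
      ((Nat.factorial n : ℝ) * Real.Gamma (μ + (n:ℝ) + 1)))) := by
  have he : Summable (fun n : ℕ => mcoef μ y n * (Real.exp (-x) * x ^ n)) :=
    summable_g hμ hy hx.le
  have hg' := summable_g' hμ hy (y := y) hx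
  have hd : Summable (fun n : ℕ => mcoef μ y n * (Real.exp (-x) * ((n:ℝ) * x ^ (n - 1)))) := by
    apply (hg'.add he).congr
    intro n; ring
  have hshift : Summable (fun n : ℕ =>
      mcoef μ y (n+1) * (Real.exp (-x) * (((n+1:ℕ):ℝ) * x ^ ((n+1) - 1)))) :=
    (summable_nat_add_iff 1).2 hd
  apply (hshift.sub he).congr
  intro n
  have hn1 : (n + 1) - 1 = n := by omega
  rw [hn1]
  push_cast
  linear_combination (Real.exp (-x) * x ^ n) * mcoef_rec hμ hy n

lemma target_eq {μ x y : ℝ} (hx : 0 < x) (hy : 0 < y) :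
    (y / x) ^ (μ / 2) * Real.exp (-x - y) * besselI μ (2 * Real.sqrt (x * y)) =
    ∑' n : ℕ, Real.exp (-x) * Real.exp (-y) * (y ^ (μ + (n:ℝ)) * x ^ n /
      ((Nat.factorial n : ℝ) * Real.Gamma (μ + (n:ℝ) + 1))) := by
  simp only [besselI]
  rw [← tsum_mul_left]
  exact tsum_congr (fun n => by rw [← term2_eq hx hy n])

theorem marcumQ_deriv_x (μ x y : ℝ) (hμ : 0 < μ) (hx : 0 < x) (hy : 0 < y) :
    deriv (fun x' => marcumQ μ x' y) x =
        (y / x) ^ (μ / 2) * Real.exp (-x - y) * besselI μ (2 * Real.sqrt (x * y)) ∧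
      StrictMonoOn (fun x' => marcumQ μ x' y) (Set.Ioi 0) := by
  have hmain : ∀ x0 : ℝ, 0 < x0 → HasDerivAt (fun x' => marcumQ μ x' y)
      (∑' n : ℕ, Real.exp (-x0) * Real.exp (-y) * (y ^ (μ + (n:ℝ)) * x0 ^ n /
        ((Nat.factorial n : ℝ) * Real.Gamma (μ + (n:ℝ) + 1)))) x0 := by
    intro x0 hx0
    have h1 := hasDerivAt_sumg hμ hy hx0
    rw [sum_g'_eq hμ hy hx0] at h1
    apply h1.congr_of_eventuallyEq
    filter_upwards [Ioi_mem_nhds hx0] with x' hx'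
    exact marcumQ_eq hμ hy hx'
  have hpos : ∀ x0 : ℝ, 0 < x0 →
      0 < ∑' n : ℕ, Real.exp (-x0) * Real.exp (-y) * (y ^ (μ + (n:ℝ)) * x0 ^ n /
        ((Nat.factorial n : ℝ) * Real.Gamma (μ + (n:ℝ) + 1))) := by
    intro x0 hx0
    have hsum := summable_F hμ hy (y := y) hx0
    have hterm : ∀ n : ℕ, 0 < Real.exp (-x0) * Real.exp (-y) * (y ^ (μ + (n:ℝ)) * x0 ^ n /
        ((Nat.factorial n : ℝ) * Real.Gamma (μ + (n:ℝ) + 1))) := by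
      intro n
      have hΓ : 0 < Real.Gamma (μ + (n:ℝ) + 1) := Real.Gamma_pos_of_pos (by positivity)
      have hrp : 0 < y ^ (μ + (n:ℝ)) := Real.rpow_pos_of_pos hy _
      positivity
    exact Summable.tsum_pos hsum (fun n => (hterm n).le) 0 (hterm 0)
  constructor
  · exact (hmain x hx).deriv.trans (target_eq hx hy).symm
  · apply strictMonoOn_of_deriv_pos (convex_Ioi 0)
    · exact fun x0 hx0 => ((hmain x0 hx0).continuousAt).continuousWithinAt
    · intro x0 hx0
      rw [interior_Ioi] at hx0
      rw [(hmain x0 hx0).deriv]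
      exact hpos x0 hx0
end

section
/- For μ > 0, x > 0, y > 0, the second partial derivative of the Marcum Q-function with respect to x satisfies ∂²Q_μ(x,y)/∂x² = (c_{μ+1}(x,y) − 1)(Q_{μ+1}(x,y) − Q_μ(x,y)), where c_ν(x,y) = √(y/x) · I_ν(2√(xy))/I_{ν−1}(2√(xy)). -/
open Real MeasureTheory Set Filter

/-- Bessel-function ratio `c_ν(x,y) = √(y/x) I_ν(2√(xy))/I_{ν−1}(2√(xy))`. -/
noncomputable def besselRatioC (ν x y : ℝ) : ℝ :=
  Real.sqrt (y / x) * besselI ν (2 * Real.sqrt (x * y)) / besselI (ν - 1) (2 * Real.sqrt (x * y))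

noncomputable def uG (a y : ℝ) : ℝ := ∫ t in Set.Ioi y, Real.exp (-t) * t ^ (a - 1)

lemma uG_integrableOn {a y : ℝ} (ha : 0 < a) (hy : 0 < y) :
    IntegrableOn (fun t => Real.exp (-t) * t ^ (a - 1)) (Set.Ioi y) :=
  (Real.GammaIntegral_convergent ha).mono_set (Set.Ioi_subset_Ioi hy.le)

lemma uG_nonneg {a y : ℝ} (hy : 0 < y) : 0 ≤ uG a y := by
  apply setIntegral_nonneg measurableSet_Ioi
  intro t ht
  exact mul_nonneg (Real.exp_pos _).le (Real.rpow_nonneg (le_of_lt (hy.trans ht)) _)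

lemma uG_le_Gamma {a y : ℝ} (ha : 0 < a) (hy : 0 < y) : uG a y ≤ Real.Gamma a := by
  rw [Real.Gamma_eq_integral ha]
  apply setIntegral_mono_set (Real.GammaIntegral_convergent ha)
  · filter_upwards [ae_restrict_mem measurableSet_Ioi] with t ht
    exact mul_nonneg (Real.exp_pos _).le (Real.rpow_nonneg (le_of_lt ht) _)
  · exact HasSubset.Subset.eventuallyLE (Set.Ioi_subset_Ioi hy.le)

lemma uG_succ {a y : ℝ} (ha : 0 < a) (hy : 0 < y) :
    uG (a + 1) y = y ^ a * Real.exp (-y) + a * uG a y := by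
  have key : ∫ t in Set.Ioi y, (Real.exp (-t) * t ^ a - a * (Real.exp (-t) * t ^ (a - 1)))
      = y ^ a * Real.exp (-y) := by
    have := integral_Ioi_of_hasDerivAt_of_tendsto
      (f := fun t : ℝ => -(t ^ a * Real.exp (-t)))
      (f' := fun t : ℝ => Real.exp (-t) * t ^ a - a * (Real.exp (-t) * t ^ (a - 1)))
      (a := y) (m := 0) ?_ ?_ ?_ ?_
    · rw [this]; ring
    · exact (((Real.continuousAt_rpow_const y a (Or.inl hy.ne')).mul
        (by fun_prop)).neg).continuousWithinAt
    · intro t ht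
      have htpos : 0 < t := hy.trans ht
      have h1 : HasDerivAt (fun t : ℝ => t ^ a) (a * t ^ (a - 1)) t :=
        Real.hasDerivAt_rpow_const (Or.inl htpos.ne')
      have h2 : HasDerivAt (fun t : ℝ => Real.exp (-t)) (-Real.exp (-t)) t := by
        simpa using (hasDerivAt_neg t).exp
      have := (h1.mul h2).neg
      convert this using 1
      · rfl
      · ring
    · exact ((uG_integrableOn (by linarith : (0:ℝ) < a + 1) hy).congr_fun
        (fun t _ => by norm_num) measurableSet_Ioi).sub
        ((uG_integrableOn ha hy).const_mul a)
    · have := tendsto_rpow_mul_exp_neg_mul_atTop_nhds_zero a 1 one_pos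
      simp only [neg_mul, one_mul] at this
      simpa using this.neg
  have hi1 : IntegrableOn (fun t => Real.exp (-t) * t ^ a) (Set.Ioi y) :=
    (uG_integrableOn (by linarith : (0:ℝ) < a + 1) hy).congr_fun
      (fun t _ => by norm_num) measurableSet_Ioi
  have hi2 := (uG_integrableOn ha hy).const_mul a
  rw [integral_sub hi1 hi2, MeasureTheory.integral_const_mul] at key
  have : uG (a + 1) y = ∫ t in Set.Ioi y, Real.exp (-t) * t ^ a := by
    unfold uG; norm_num
  rw [this]
  unfold uG
  linarith [key]

lemma summable_nmul {c : ℝ} (hc : 0 ≤ c) :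
    Summable (fun n : ℕ => (n : ℝ) * c ^ (n - 1) / n.factorial) := by
  rw [← summable_nat_add_iff 1]
  apply (Real.summable_pow_div_factorial c).congr
  intro n
  rw [Nat.factorial_succ]
  push_cast
  rw [mul_div_mul_left _ _ (by positivity : ((n:ℝ) + 1) ≠ 0)]

lemma summable_coeff {c : ℕ → ℝ} (hc : ∀ n, |c n| ≤ 1) (x : ℝ) :
    Summable (fun n : ℕ => Real.exp (-x) * x ^ n / n.factorial * c n) := by
  apply Summable.of_norm_bounded ((Real.summable_pow_div_factorial |x|).mul_left (Real.exp (-x)))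
  intro n
  rw [norm_mul, norm_div]
  calc ‖Real.exp (-x) * x ^ n‖ / ‖(n.factorial : ℝ)‖ * ‖c n‖
      ≤ ‖Real.exp (-x) * x ^ n‖ / ‖(n.factorial : ℝ)‖ * 1 := by
        gcongr; exact hc n
    _ = Real.exp (-x) * (|x| ^ n / n.factorial) := by
        rw [mul_one, norm_mul, Real.norm_eq_abs, Real.norm_eq_abs, Real.norm_eq_abs,
          abs_of_pos (Real.exp_pos _), abs_pow, Nat.abs_cast]
        ring

lemma hasDerivAt_poisson_sum {c : ℕ → ℝ} (hc : ∀ n, |c n| ≤ 1) {x : ℝ} (hx : 0 < x) :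
    HasDerivAt (fun x' => ∑' n : ℕ, Real.exp (-x') * x' ^ n / n.factorial * c n)
      ((∑' n : ℕ, Real.exp (-x) * x ^ n / n.factorial * c (n + 1)) -
        ∑' n : ℕ, Real.exp (-x) * x ^ n / n.factorial * c n) x := by
  set g : ℕ → ℝ → ℝ := fun n x' => Real.exp (-x') * x' ^ n / n.factorial * c n with hg
  set g' : ℕ → ℝ → ℝ := fun n x' =>
    (Real.exp (-x') * ((n : ℝ) * x' ^ (n - 1)) - Real.exp (-x') * x' ^ n) / n.factorial * c n
    with hg'
  set u : ℕ → ℝ := fun n =>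
    Real.exp 1 * ((n : ℝ) * (x + 1) ^ (n - 1) / n.factorial + (x + 1) ^ n / n.factorial) with hu
  have hder : ∀ (n : ℕ) (x' : ℝ), x' ∈ Set.Ioo (-1 : ℝ) (x + 1) → HasDerivAt (g n) (g' n x') x' := by
    intro n x' _
    have h2 : HasDerivAt (fun t : ℝ => Real.exp (-t)) (-Real.exp (-x')) x' := by
      simpa using (hasDerivAt_neg x').exp
    have h1 : HasDerivAt (fun t : ℝ => t ^ n) ((n : ℝ) * x' ^ (n - 1)) x' := hasDerivAt_pow n x'
    have := ((h2.mul h1).div_const (n.factorial : ℝ)).mul_const (c n)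
    convert this using 1
    · rfl
    · rfl
    · rfl
    · simp only [hg']
      ring
  have hbound : ∀ (n : ℕ) (x' : ℝ), x' ∈ Set.Ioo (-1 : ℝ) (x + 1) → ‖g' n x'‖ ≤ u n := by
    intro n x' hx'
    have hxabs : |x'| ≤ x + 1 := by
      rw [abs_le]; constructor <;> [linarith [hx'.1, hx.le]; linarith [hx'.2]]
    have hexp : Real.exp (-x') ≤ Real.exp 1 := Real.exp_le_exp.2 (by linarith [hx'.1])
    have hxp : ∀ m : ℕ, |x'| ^ m ≤ (x + 1) ^ m := fun m =>
      pow_le_pow_left₀ (abs_nonneg _) hxabs m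
    have hA : |Real.exp (-x') * ((n : ℝ) * x' ^ (n - 1))| ≤ Real.exp 1 * ((n:ℝ) * (x+1) ^ (n-1)) := by
      rw [abs_mul, abs_mul, abs_of_pos (Real.exp_pos _), Nat.abs_cast, abs_pow]
      gcongr
    have hB : |Real.exp (-x') * x' ^ n| ≤ Real.exp 1 * (x+1) ^ n := by
      rw [abs_mul, abs_of_pos (Real.exp_pos _), abs_pow]
      gcongr
    have hnum : |Real.exp (-x') * ((n : ℝ) * x' ^ (n - 1)) - Real.exp (-x') * x' ^ n|
        ≤ Real.exp 1 * ((n:ℝ) * (x+1) ^ (n-1)) + Real.exp 1 * (x+1) ^ n :=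
      (abs_sub _ _).trans (add_le_add hA hB)
    simp only [hg', norm_mul, norm_div, Real.norm_eq_abs, Nat.abs_cast]
    calc |Real.exp (-x') * ((n : ℝ) * x' ^ (n - 1)) - Real.exp (-x') * x' ^ n| / (n.factorial : ℝ) * |c n|
        ≤ (Real.exp 1 * ((n:ℝ) * (x+1) ^ (n-1)) + Real.exp 1 * (x+1) ^ n) / (n.factorial : ℝ) * 1 := by
          gcongr
          exact hc n
      _ = u n := by simp only [hu]; field_simp
  have hu_summable : Summable u := by
    apply Summable.mul_left
    exact (summable_nmul (by linarith : (0:ℝ) ≤ x + 1)).add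
      (Real.summable_pow_div_factorial (x + 1))
  have hx_mem : x ∈ Set.Ioo (-1 : ℝ) (x + 1) := ⟨by linarith, by linarith⟩
  have hmain := hasDerivAt_tsum_of_isPreconnected hu_summable isOpen_Ioo
    (convex_Ioo _ _).isPreconnected hder hbound hx_mem
    (summable_coeff hc x) hx_mem
  refine hmain.congr_deriv (Eq.symm ?_)
  -- now compute ∑' n, g' n x
  have hs1 : Summable (fun n : ℕ => g' n x) :=
    (hu_summable.of_norm_bounded (fun n => hbound n x hx_mem))
  have hsA : Summable (fun n : ℕ => Real.exp (-x) * ((n:ℝ) * x ^ (n-1)) / n.factorial * c n) := by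
    apply Summable.of_norm_bounded (((summable_nmul hx.le).mul_left (Real.exp (-x))))
    intro n
    simp only [norm_mul, norm_div, Real.norm_eq_abs, abs_of_pos (Real.exp_pos _), Nat.abs_cast,
      abs_mul, abs_pow, abs_of_pos hx]
    calc Real.exp (-x) * ((n:ℝ) * x ^ (n-1)) / (n.factorial:ℝ) * |c n|
        ≤ Real.exp (-x) * ((n:ℝ) * x ^ (n-1)) / (n.factorial:ℝ) * 1 := by
          gcongr
          exact hc n
      _ = Real.exp (-x) * ((n:ℝ) * x ^ (n-1) / n.factorial) := by ring
  have hsB : Summable (fun n : ℕ => Real.exp (-x) * x ^ n / n.factorial * c n) := summable_coeff hc x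
  have hsplit : ∀ n : ℕ, g' n x =
      Real.exp (-x) * ((n:ℝ) * x ^ (n-1)) / n.factorial * c n
        - Real.exp (-x) * x ^ n / n.factorial * c n := by
    intro n; simp only [hg']; ring
  rw [tsum_congr hsplit, Summable.tsum_sub hsA hsB]
  congr 1
  -- reindex: ∑' n, exp(-x) * (n * x^(n-1))/n! * c n = ∑' n, exp(-x)*x^n/n! * c (n+1)
  rw [Summable.tsum_eq_zero_add hsA]
  simp only [Nat.cast_zero, zero_mul, mul_zero, zero_div, zero_mul, Nat.cast_succ]
  rw [zero_add]
  apply tsum_congr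
  intro n
  rw [Nat.add_sub_cancel, Nat.factorial_succ]
  push_cast
  have hfac : (0:ℝ) < n.factorial := by positivity
  field_simp

lemma Gamma_arg_pos {μ : ℝ} (hμ : 0 < μ) (n : ℕ) : 0 < μ + (n : ℝ) :=
  add_pos_of_pos_of_nonneg hμ (Nat.cast_nonneg n)

lemma integrand_eq {μ x t : ℝ} (hμ : 0 < μ) (hx : 0 < x) (ht : 0 < t) :
    t ^ ((μ - 1) / 2) * Real.exp (-t - x) * besselI (μ - 1) (2 * Real.sqrt (x * t))
      = x ^ ((μ - 1) / 2) * ∑' n : ℕ,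
          Real.exp (-x) * x ^ n / n.factorial / Real.Gamma (μ + n) *
            (Real.exp (-t) * t ^ (μ + (n : ℝ) - 1)) := by
  have hxt : 0 < x * t := mul_pos hx ht
  unfold besselI
  rw [← tsum_mul_left, ← tsum_mul_left]
  apply tsum_congr
  intro n
  have h2 : 2 * Real.sqrt (x * t) / 2 = Real.sqrt (x * t) := by ring
  have hsqrt : Real.sqrt (x * t) ^ (μ - 1 + 2 * (n : ℝ))
      = x ^ ((μ - 1) / 2) * t ^ ((μ - 1) / 2) * (x ^ n * t ^ n) := by
    rw [Real.sqrt_eq_rpow, ← Real.rpow_mul hxt.le,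
      show (1 / 2 : ℝ) * (μ - 1 + 2 * (n : ℝ)) = (μ - 1) / 2 + (n : ℝ) by ring,
      Real.rpow_add hxt, Real.mul_rpow hx.le ht.le, Real.mul_rpow hx.le ht.le,
      Real.rpow_natCast, Real.rpow_natCast]
  have e1 : t ^ (μ + (n : ℝ) - 1) = t ^ ((μ - 1) / 2) * t ^ ((μ - 1) / 2) * t ^ n := by
    rw [← Real.rpow_natCast t n, ← Real.rpow_add ht, ← Real.rpow_add ht]
    congr 1; ring
  have e2 : Real.exp (-t - x) = Real.exp (-t) * Real.exp (-x) := by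
    rw [show -t - x = -t + -x by ring, Real.exp_add]
  have e3 : Real.Gamma (μ - 1 + (n : ℝ) + 1) = Real.Gamma (μ + n) := by
    congr 1; ring
  rw [h2, hsqrt, e1, e2, e3]
  have hΓ : Real.Gamma (μ + n) ≠ 0 := (Real.Gamma_pos_of_pos (Gamma_arg_pos hμ n)).ne'
  have hfac : ((n.factorial : ℝ)) ≠ 0 := by positivity
  field_simp

lemma marcumQ_eq_tsum {μ x y : ℝ} (hμ : 0 < μ) (hx : 0 < x) (hy : 0 < y) :
    marcumQ μ x y = ∑' n : ℕ,
      Real.exp (-x) * x ^ n / n.factorial * (uG (μ + n) y / Real.Gamma (μ + n)) := by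
  unfold marcumQ
  have hswap : (∫ t in Set.Ioi y,
      t ^ ((μ - 1) / 2) * Real.exp (-t - x) * besselI (μ - 1) (2 * Real.sqrt (x * t)))
      = x ^ ((μ - 1) / 2) * ∑' n : ℕ,
          Real.exp (-x) * x ^ n / n.factorial / Real.Gamma (μ + n) * uG (μ + n) y := by
    rw [setIntegral_congr_fun measurableSet_Ioi
      (fun t (ht : t ∈ Set.Ioi y) => integrand_eq hμ hx (hy.trans ht)), integral_const_mul]
    congr 1
    rw [← MeasureTheory.integral_tsum_of_summable_integral_norm]
    · apply tsum_congr
      intro n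
      have : (∫ t in Set.Ioi y, Real.exp (-x) * x ^ n / n.factorial / Real.Gamma (μ + n) *
          (Real.exp (-t) * t ^ (μ + (n : ℝ) - 1)))
          = Real.exp (-x) * x ^ n / n.factorial / Real.Gamma (μ + n) *
            ∫ t in Set.Ioi y, Real.exp (-t) * t ^ (μ + (n : ℝ) - 1) := integral_const_mul _ _
      rw [this]
      rfl
    · intro n
      exact ((uG_integrableOn (Gamma_arg_pos hμ n) hy).const_mul _)
    · -- summability of integrals of norms
      have hΓpos : ∀ n : ℕ, (0:ℝ) < Real.Gamma (μ + n) :=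
        fun n => Real.Gamma_pos_of_pos (Gamma_arg_pos hμ n)
      apply Summable.of_nonneg_of_le
        (fun n => integral_nonneg (fun t => norm_nonneg _))
        ?_ ((Real.summable_pow_div_factorial x).mul_left (Real.exp (-x)))
      intro n
      have hc : (0:ℝ) ≤ Real.exp (-x) * x ^ n / n.factorial / Real.Gamma (μ + n) := by
        have := (hΓpos n).le
        positivity
      have heq : (∫ t in Set.Ioi y, ‖Real.exp (-x) * x ^ n / n.factorial / Real.Gamma (μ + n) *
          (Real.exp (-t) * t ^ (μ + (n : ℝ) - 1))‖)
          = Real.exp (-x) * x ^ n / n.factorial / Real.Gamma (μ + n) * uG (μ + n) y := by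
        unfold uG
        rw [← integral_const_mul]
        apply setIntegral_congr_fun measurableSet_Ioi
        intro t ht
        have htpos : 0 < t := hy.trans ht
        simp only []
        rw [Real.norm_eq_abs, abs_of_nonneg]
        positivity
      rw [heq]
      calc Real.exp (-x) * x ^ n / n.factorial / Real.Gamma (μ + n) * uG (μ + n) y
          ≤ Real.exp (-x) * x ^ n / n.factorial / Real.Gamma (μ + n) * Real.Gamma (μ + n) := by
            gcongr
            exact uG_le_Gamma (Gamma_arg_pos hμ n) hy
        _ = Real.exp (-x) * (x ^ n / n.factorial) := by
            field_simp
  rw [hswap, ← mul_assoc, ← Real.rpow_add hx,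
    show (1 - μ) / 2 + (μ - 1) / 2 = 0 by ring, Real.rpow_zero, one_mul]
  apply tsum_congr
  intro n
  ring

-- coefficients of the Poisson series for marcumQ
noncomputable def qc (μ y : ℝ) : ℕ → ℝ := fun n => uG (μ + n) y / Real.Gamma (μ + n)

lemma qc_nonneg {μ y : ℝ} (hμ : 0 < μ) (hy : 0 < y) (n : ℕ) : 0 ≤ qc μ y n :=
  div_nonneg (uG_nonneg hy) (Real.Gamma_pos_of_pos (Gamma_arg_pos hμ n)).le

lemma qc_abs_le {μ y : ℝ} (hμ : 0 < μ) (hy : 0 < y) (n : ℕ) : |qc μ y n| ≤ 1 := by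
  rw [abs_of_nonneg (qc_nonneg hμ hy n)]
  rw [qc, div_le_one (Real.Gamma_pos_of_pos (Gamma_arg_pos hμ n))]
  exact uG_le_Gamma (Gamma_arg_pos hμ n) hy

lemma qc_succ (μ y : ℝ) (n : ℕ) : qc μ y (n + 1) = qc (μ + 1) y n := by
  simp only [qc]
  have : μ + ((n : ℝ) + 1) = μ + 1 + n := by ring
  push_cast
  rw [this]

lemma marcumQ_hasDerivAt {μ x y : ℝ} (hμ : 0 < μ) (hx : 0 < x) (hy : 0 < y) :
    HasDerivAt (fun x' => marcumQ μ x' y) (marcumQ (μ + 1) x y - marcumQ μ x y) x := by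
  have h := hasDerivAt_poisson_sum (qc_abs_le hμ hy) hx
  have h2 : HasDerivAt (fun x' => ∑' n : ℕ, Real.exp (-x') * x' ^ n / n.factorial * qc μ y n)
      (marcumQ (μ + 1) x y - marcumQ μ x y) x := by
    convert h using 2
    · rw [marcumQ_eq_tsum (by linarith) hx hy]
      apply tsum_congr
      intro n
      rw [qc_succ]
      rfl
    · rw [marcumQ_eq_tsum hμ hx hy]; rfl
  apply h2.congr_of_eventuallyEq
  filter_upwards [Ioi_mem_nhds hx] with x' hx'
  rw [marcumQ_eq_tsum hμ hx' hy]
  rfl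

lemma fact_Gamma_le {ν : ℝ} (hν : 0 < ν) (n : ℕ) :
    (n.factorial : ℝ) * Real.Gamma (ν + 1) ≤ Real.Gamma (ν + n + 1) := by
  induction n with
  | zero => simp
  | succ m ih =>
    have harg : ν + (m : ℝ) + 1 ≠ 0 := by positivity
    have : Real.Gamma (ν + (m + 1 : ℕ) + 1) = (ν + m + 1) * Real.Gamma (ν + m + 1) := by
      rw [show ν + ((m : ℕ) + 1 : ℕ) + 1 = (ν + m + 1) + 1 by push_cast; ring,
        Real.Gamma_add_one harg]
    rw [this, Nat.factorial_succ]
    push_cast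
    have h1 : ((m : ℝ) + 1) * ((m.factorial : ℝ) * Real.Gamma (ν + 1))
        ≤ ((m : ℝ) + 1) * Real.Gamma (ν + m + 1) := by
      apply mul_le_mul_of_nonneg_left ih (by positivity)
    calc ((m : ℝ) + 1) * (m.factorial : ℝ) * Real.Gamma (ν + 1)
        = ((m : ℝ) + 1) * ((m.factorial : ℝ) * Real.Gamma (ν + 1)) := by ring
      _ ≤ ((m : ℝ) + 1) * Real.Gamma (ν + m + 1) := h1
      _ ≤ (ν + m + 1) * Real.Gamma (ν + m + 1) := by
          apply mul_le_mul_of_nonneg_right (by linarith)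
            (Real.Gamma_pos_of_pos (by positivity)).le

lemma summable_S {ν : ℝ} (hν : 0 < ν) (w : ℝ) (hw : 0 ≤ w) :
    Summable (fun n : ℕ => w ^ n / (n.factorial * Real.Gamma (ν + n + 1))) := by
  apply Summable.of_nonneg_of_le
    (fun n => by
      have := Real.Gamma_pos_of_pos (show (0:ℝ) < ν + n + 1 by positivity)
      positivity)
    ?_ ((Real.summable_pow_div_factorial w).mul_right (1 / Real.Gamma (ν + 1)))
  intro n
  have hΓ1 : 0 < Real.Gamma (ν + 1) := Real.Gamma_pos_of_pos (by linarith)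
  have hΓn : 0 < Real.Gamma (ν + n + 1) := Real.Gamma_pos_of_pos (by positivity)
  have hfac : (0:ℝ) < n.factorial := by positivity
  have hΓle : Real.Gamma (ν + 1) ≤ Real.Gamma (ν + n + 1) := by
    calc Real.Gamma (ν + 1) ≤ (n.factorial : ℝ) * Real.Gamma (ν + 1) := by
          apply le_mul_of_one_le_left hΓ1.le
          exact_mod_cast Nat.one_le_iff_ne_zero.2 n.factorial_ne_zero
      _ ≤ Real.Gamma (ν + n + 1) := fact_Gamma_le hν n
  calc w ^ n / ((n.factorial : ℝ) * Real.Gamma (ν + n + 1))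
      ≤ w ^ n / ((n.factorial : ℝ) * Real.Gamma (ν + 1)) := by
        gcongr
    _ = w ^ n / n.factorial * (1 / Real.Gamma (ν + 1)) := by
        field_simp

noncomputable def Sser (ν x y : ℝ) : ℝ :=
  ∑' n : ℕ, (x * y) ^ n / (n.factorial * Real.Gamma (ν + n + 1))

lemma Sser_pos {ν x y : ℝ} (hν : 0 < ν) (hx : 0 < x) (hy : 0 < y) : 0 < Sser ν x y := by
  have hsum := summable_S hν (x * y) (by positivity)
  apply Summable.tsum_pos hsum
    (fun n => by
      have := Real.Gamma_pos_of_pos (show (0:ℝ) < ν + n + 1 by positivity)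
      positivity) 0
  have : 0 < Real.Gamma (ν + 0 + 1) := Real.Gamma_pos_of_pos (by norm_num; linarith)
  positivity

lemma besselI_eq {ν x y : ℝ} (hν : 0 < ν) (hx : 0 < x) (hy : 0 < y) :
    besselI ν (2 * Real.sqrt (x * y)) = (x * y) ^ (ν / 2) * Sser ν x y := by
  unfold besselI Sser
  rw [← tsum_mul_left]
  apply tsum_congr
  intro n
  have hxy : 0 < x * y := mul_pos hx hy
  have h2 : 2 * Real.sqrt (x * y) / 2 = Real.sqrt (x * y) := by ring
  rw [h2, Real.sqrt_eq_rpow, ← Real.rpow_mul hxy.le,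
    show (1 / 2 : ℝ) * (ν + 2 * (n : ℝ)) = ν / 2 + (n : ℝ) by ring,
    Real.rpow_add hxy]
  rw [Real.rpow_natCast]
  ring

lemma marcumQ_succ_sub {ν x y : ℝ} (hν : 0 < ν) (hx : 0 < x) (hy : 0 < y) :
    marcumQ (ν + 1) x y - marcumQ ν x y
      = Real.exp (-x - y) * y ^ ν * Sser ν x y := by
  have e1 : marcumQ (ν + 1) x y
      = ∑' n : ℕ, Real.exp (-x) * x ^ n / n.factorial * qc (ν + 1) y n := by
    rw [marcumQ_eq_tsum (by linarith : (0:ℝ) < ν + 1) hx hy]; rfl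
  have e2 : marcumQ ν x y
      = ∑' n : ℕ, Real.exp (-x) * x ^ n / n.factorial * qc ν y n := by
    rw [marcumQ_eq_tsum hν hx hy]; rfl
  rw [e1, e2, ← Summable.tsum_sub (summable_coeff (qc_abs_le (by linarith) hy) x)
    (summable_coeff (qc_abs_le hν hy) x)]
  unfold Sser
  rw [← tsum_mul_left]
  apply tsum_congr
  intro n
  show Real.exp (-x) * x ^ n / n.factorial * qc (ν + 1) y n
      - Real.exp (-x) * x ^ n / n.factorial * qc ν y n
      = Real.exp (-x - y) * y ^ ν * ((x * y) ^ n / (n.factorial * Real.Gamma (ν + n + 1)))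
  have hdiff : qc (ν + 1) y n - qc ν y n = y ^ (ν + n) * Real.exp (-y) / Real.Gamma (ν + n + 1) := by
    have ha : 0 < ν + (n : ℝ) := Gamma_arg_pos hν n
    have hΓa : 0 < Real.Gamma (ν + n) := Real.Gamma_pos_of_pos ha
    have hΓa1 : Real.Gamma (ν + (n : ℝ) + 1) = (ν + n) * Real.Gamma (ν + n) :=
      Real.Gamma_add_one ha.ne'
    have hqc1 : qc (ν + 1) y n = uG (ν + (n : ℝ) + 1) y / Real.Gamma (ν + (n : ℝ) + 1) := by
      simp only [qc]
      rw [show ν + 1 + (n : ℝ) = ν + (n : ℝ) + 1 by ring]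
    rw [hqc1, qc, uG_succ ha hy, hΓa1]
    field_simp
    ring
  calc Real.exp (-x) * x ^ n / n.factorial * qc (ν + 1) y n
      - Real.exp (-x) * x ^ n / n.factorial * qc ν y n
      = Real.exp (-x) * x ^ n / n.factorial * (qc (ν + 1) y n - qc ν y n) := by ring
    _ = Real.exp (-x) * x ^ n / n.factorial * (y ^ (ν + n) * Real.exp (-y) / Real.Gamma (ν + n + 1)) := by
        rw [hdiff]
    _ = Real.exp (-x - y) * y ^ ν * ((x * y) ^ n / (n.factorial * Real.Gamma (ν + n + 1))) := by
        rw [show Real.exp (-x - y) = Real.exp (-x) * Real.exp (-y) by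
            rw [show -x - y = -x + -y by ring, Real.exp_add],
          show y ^ (ν + (n : ℝ)) = y ^ ν * y ^ n by
            rw [← Real.rpow_natCast y n, ← Real.rpow_add hy],
          mul_pow]
        ring

theorem marcumQ_second_deriv_x (μ x y : ℝ) (hμ : 0 < μ) (hx : 0 < x) (hy : 0 < y) :
    deriv (deriv (fun x' => marcumQ μ x' y)) x =
      (besselRatioC (μ + 1) x y - 1) * (marcumQ (μ + 1) x y - marcumQ μ x y) := by
  have hEv : deriv (fun x' => marcumQ μ x' y)
      =ᶠ[nhds x] fun x' => marcumQ (μ + 1) x' y - marcumQ μ x' y := by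
    filter_upwards [Ioi_mem_nhds hx] with x' hx'
    exact (marcumQ_hasDerivAt hμ hx' hy).deriv
  rw [hEv.deriv_eq]
  have hD : HasDerivAt (fun x' => marcumQ (μ + 1) x' y - marcumQ μ x' y)
      ((marcumQ (μ + 1 + 1) x y - marcumQ (μ + 1) x y) - (marcumQ (μ + 1) x y - marcumQ μ x y)) x :=
    (marcumQ_hasDerivAt (by linarith) hx hy).sub (marcumQ_hasDerivAt hμ hx hy)
  rw [hD.deriv]
  -- now algebra
  have hxy : 0 < x * y := mul_pos hx hy
  have hS1 : 0 < Sser μ x y := Sser_pos hμ hx hy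
  have key : marcumQ (μ + 1 + 1) x y - marcumQ (μ + 1) x y
      = besselRatioC (μ + 1) x y * (marcumQ (μ + 1) x y - marcumQ μ x y) := by
    have hS2 : 0 < Sser (μ + 1) x y := Sser_pos (by linarith) hx hy
    have hMpos : (0:ℝ) < (x*y) ^ (μ/2) := Real.rpow_pos_of_pos hxy _
    have hpow : (x * y) ^ ((μ + 1) / 2) = (x * y) ^ (μ / 2) * Real.sqrt (x * y) := by
      rw [Real.sqrt_eq_rpow, ← Real.rpow_add hxy]
      congr 1; ring
    have hsqrt : Real.sqrt (y / x) * Real.sqrt (x * y) = y := by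
      rw [← Real.sqrt_mul (by positivity), show y / x * (x * y) = y * y by field_simp,
        Real.sqrt_mul_self hy.le]
    have hypow : y ^ (μ + 1) = y ^ μ * y := by
      rw [Real.rpow_add hy, Real.rpow_one]
    have hc : besselRatioC (μ + 1) x y = y * Sser (μ + 1) x y / Sser μ x y := by
      unfold besselRatioC
      rw [show μ + 1 - 1 = μ by ring, besselI_eq (by linarith : (0:ℝ) < μ + 1) hx hy,
        besselI_eq hμ hx hy, hpow]
      rw [div_eq_div_iff (by positivity) hS1.ne']
      linear_combination ((x * y) ^ (μ / 2) * Sser (μ + 1) x y * Sser μ x y) * hsqrt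
    rw [marcumQ_succ_sub (by linarith : (0:ℝ) < μ + 1) hx hy, marcumQ_succ_sub hμ hx hy,
      hc, hypow]
    field_simp
  rw [key]
  ring
end

section
/- Fix μ > 0 and y with 0 < y < μ + 1. Then Q_μ(x,y) is a strictly concave function of x on (0,∞), i.e., ∂²Q_μ(x,y)/∂x² < 0 for all x > 0. -/
open Real MeasureTheory Set Filter

/-! ### Auxiliary series lemmas -/

/-- The exponential-type series `∑ aₙ xⁿ/n!`. -/
noncomputable def mySum (a : ℕ → ℝ) (x : ℝ) : ℝ := ∑' n, a n * x ^ n / (Nat.factorial n : ℝ)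

lemma mySum_summable {a : ℕ → ℝ} {C : ℝ} (hC : ∀ n, |a n| ≤ C) (x : ℝ) :
    Summable (fun n => a n * x ^ n / (Nat.factorial n : ℝ)) := by
  apply Summable.of_norm
  apply Summable.of_nonneg_of_le (fun n => norm_nonneg _)
    (fun n => ?_) ((Real.summable_pow_div_factorial |x|).mul_left C)
  have : ‖a n * x ^ n / (Nat.factorial n : ℝ)‖ = |a n| * (|x| ^ n / (Nat.factorial n : ℝ)) := by
    rw [Real.norm_eq_abs, abs_div, abs_mul, Nat.abs_cast, abs_pow, mul_div_assoc]
  rw [this]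
  exact mul_le_mul_of_nonneg_right (hC n) (by positivity)

lemma mySum_sub {a b : ℕ → ℝ} {C D : ℝ} (hC : ∀ n, |a n| ≤ C) (hD : ∀ n, |b n| ≤ D) (x : ℝ) :
    mySum (fun n => a n - b n) x = mySum a x - mySum b x := by
  unfold mySum
  rw [← Summable.tsum_sub (mySum_summable hC x) (mySum_summable hD x)]
  apply tsum_congr
  intro n
  ring

lemma mySum_hasDerivAt {a : ℕ → ℝ} {C : ℝ} (hC : ∀ n, |a n| ≤ C) (x : ℝ) :
    HasDerivAt (mySum a) (mySum (fun n => a (n + 1)) x) x := by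
  have h0 : (0:ℝ) ≤ C := le_trans (abs_nonneg _) (hC 0)
  set R : ℝ := |x| + 1 with hR
  have hRpos : 0 < R := by positivity
  have hxR : x ∈ Metric.ball (0:ℝ) R := by
    simp only [Metric.mem_ball, dist_zero_right, Real.norm_eq_abs, hR]
    linarith
  have hu : Summable (fun n : ℕ => C * (((n : ℝ) * R ^ (n - 1)) / (Nat.factorial n : ℝ))) := by
    rw [← summable_nat_add_iff 1]
    have : (fun n : ℕ => C * ((((n+1 : ℕ) : ℝ)) * R ^ ((n+1) - 1) / (Nat.factorial (n+1) : ℝ)))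
        = fun n : ℕ => C * (R ^ n / (Nat.factorial n : ℝ)) := by
      funext n
      rw [Nat.factorial_succ]
      have h1 : ((n:ℝ) + 1) ≠ 0 := by positivity
      have h2 : (Nat.factorial n : ℝ) ≠ 0 := by positivity
      push_cast
      field_simp
    rw [this]
    exact (Real.summable_pow_div_factorial R).mul_left C
  have bound : ∀ (n : ℕ) (z : ℝ), z ∈ Metric.ball (0:ℝ) R →
      ‖a n * ((n : ℝ) * z ^ (n - 1)) / (Nat.factorial n : ℝ)‖
        ≤ C * (((n : ℝ) * R ^ (n - 1)) / (Nat.factorial n : ℝ)) := by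
    intro n z hz
    have hzR : |z| ≤ R := by
      have := Metric.mem_ball.mp hz
      rw [dist_zero_right, Real.norm_eq_abs] at this
      linarith
    have : ‖a n * ((n : ℝ) * z ^ (n - 1)) / (Nat.factorial n : ℝ)‖
        = |a n| * (((n : ℝ) * |z| ^ (n - 1)) / (Nat.factorial n : ℝ)) := by
      rw [Real.norm_eq_abs, abs_div, abs_mul, abs_mul, Nat.abs_cast, Nat.abs_cast, abs_pow,
        mul_div_assoc]
    rw [this]
    have h1 : ((n : ℝ) * |z| ^ (n - 1)) / (Nat.factorial n : ℝ)
        ≤ ((n : ℝ) * R ^ (n - 1)) / (Nat.factorial n : ℝ) := by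
      gcongr
    calc |a n| * (((n : ℝ) * |z| ^ (n - 1)) / (Nat.factorial n : ℝ))
        ≤ C * (((n : ℝ) * |z| ^ (n - 1)) / (Nat.factorial n : ℝ)) :=
          mul_le_mul_of_nonneg_right (hC n) (by positivity)
      _ ≤ C * (((n : ℝ) * R ^ (n - 1)) / (Nat.factorial n : ℝ)) :=
          mul_le_mul_of_nonneg_left h1 h0
  have key := hasDerivAt_tsum_of_isPreconnected hu Metric.isOpen_ball
    (convex_ball (0:ℝ) R).isPreconnected
    (g := fun n z => a n * z ^ n / (Nat.factorial n : ℝ))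
    (g' := fun n z => a n * ((n : ℝ) * z ^ (n - 1)) / (Nat.factorial n : ℝ))
    (fun n z _ => by
      have := ((hasDerivAt_pow n z).const_mul (a n)).div_const (Nat.factorial n : ℝ)
      simpa [mul_div_assoc] using this)
    bound hxR (mySum_summable hC x) hxR
  have heq : (∑' n, a n * ((n : ℝ) * x ^ (n - 1)) / (Nat.factorial n : ℝ))
      = mySum (fun n => a (n + 1)) x := by
    have hs : Summable (fun n => a n * ((n : ℝ) * x ^ (n - 1)) / (Nat.factorial n : ℝ)) :=
      Summable.of_norm (Summable.of_nonneg_of_le (fun n => norm_nonneg _)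
        (fun n => bound n x hxR) hu)
    rw [Summable.tsum_eq_zero_add hs]
    simp only [Nat.cast_zero, zero_mul, mul_zero, zero_div, zero_add]
    unfold mySum
    congr 1
    funext n
    rw [Nat.factorial_succ]
    have h1 : ((n:ℝ) + 1) ≠ 0 := by positivity
    have h2 : (Nat.factorial n : ℝ) ≠ 0 := by positivity
    push_cast
    field_simp
  rw [heq] at key
  exact key

lemma expMySum_hasDerivAt {a : ℕ → ℝ} {C : ℝ} (hC : ∀ n, |a n| ≤ C) (x : ℝ) :
    HasDerivAt (fun x => Real.exp (-x) * mySum a x)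
      (Real.exp (-x) * mySum (fun n => a (n + 1) - a n) x) x := by
  have h1 : HasDerivAt (fun x : ℝ => Real.exp (-x)) (-Real.exp (-x)) x := by
    simpa using ((hasDerivAt_id x).neg.exp)
  have h2 := mySum_hasDerivAt hC x
  have := h1.mul h2
  have hC' : ∀ n, |a (n + 1)| ≤ C := fun n => hC (n + 1)
  rw [mySum_sub hC' hC]
  exact this.congr_deriv (by ring)

/-! ### Auxiliary integral lemmas -/

lemma tail_integrable {y : ℝ} (hy : 0 < y) {s : ℝ} (hs : 0 < s) :
    IntegrableOn (fun t : ℝ => exp (-t) * t ^ (s - 1)) (Ioi y) :=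
  (Real.GammaIntegral_convergent hs).mono_set (Ioi_subset_Ioi hy.le)

lemma tail_nonneg {y : ℝ} (hy : 0 < y) (s : ℝ) :
    0 ≤ ∫ t in Ioi y, exp (-t) * t ^ (s - 1) := by
  apply setIntegral_nonneg measurableSet_Ioi
  intro t ht
  have : (0:ℝ) < t := hy.trans ht
  positivity

lemma tail_le_Gamma {y : ℝ} (hy : 0 < y) {s : ℝ} (hs : 0 < s) :
    (∫ t in Ioi y, exp (-t) * t ^ (s - 1)) ≤ Real.Gamma s := by
  rw [Real.Gamma_eq_integral hs]
  apply setIntegral_mono_set (Real.GammaIntegral_convergent hs)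
  · filter_upwards [ae_restrict_mem measurableSet_Ioi] with t ht
    have : (0:ℝ) < t := ht
    positivity
  · exact HasSubset.Subset.eventuallyLE (Ioi_subset_Ioi hy.le)

lemma tail_rec {y : ℝ} (hy : 0 < y) {s : ℝ} (hs : 0 < s) :
    (∫ t in Ioi y, exp (-t) * t ^ ((s + 1) - 1))
      = s * (∫ t in Ioi y, exp (-t) * t ^ (s - 1)) + y ^ s * exp (-y) := by
  have hderiv : ∀ t ∈ Ici y, HasDerivAt (fun t : ℝ => -(t ^ s * exp (-t)))
      (exp (-t) * t ^ s - s * (exp (-t) * t ^ (s - 1))) t := by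
    intro t ht
    have htpos : (0:ℝ) < t := lt_of_lt_of_le hy ht
    have h1 : HasDerivAt (fun t : ℝ => t ^ s) (s * t ^ (s - 1)) t :=
      Real.hasDerivAt_rpow_const (Or.inl htpos.ne')
    have h2 : HasDerivAt (fun t : ℝ => exp (-t)) (-exp (-t)) t := by
      simpa using ((hasDerivAt_id t).neg.exp)
    have := h1.mul h2
    exact this.neg.congr_deriv (by ring)
  have hint : IntegrableOn
      (fun t : ℝ => exp (-t) * t ^ ((s + 1) - 1) - s * (exp (-t) * t ^ (s - 1))) (Ioi y) :=
    (tail_integrable hy (by linarith)).sub ((tail_integrable hy hs).const_mul s)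
  have htend : Tendsto (fun t : ℝ => -(t ^ s * exp (-t))) atTop (nhds 0) := by
    have := tendsto_rpow_mul_exp_neg_mul_atTop_nhds_zero s 1 one_pos
    simp only [neg_mul, one_mul] at this
    simpa using this.neg
  have key := integral_Ioi_of_hasDerivAt_of_tendsto' (f' := fun t =>
      exp (-t) * t ^ ((s + 1) - 1) - s * (exp (-t) * t ^ (s - 1)))
    (by simpa [add_sub_cancel_right] using hderiv) hint htend
  rw [integral_sub (tail_integrable hy (by linarith)) ((tail_integrable hy hs).const_mul s),
    MeasureTheory.integral_const_mul] at key
  linarith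

/-! ### Series representation of the Marcum Q function -/

lemma marcumQ_eq_series (μ y : ℝ) (hμ : 0 < μ) (hy : 0 < y) {x : ℝ} (hx : 0 < x) :
    marcumQ μ x y = exp (-x) *
      mySum (fun n => (∫ t in Ioi y, exp (-t) * t ^ ((μ + n) - 1)) / Real.Gamma (μ + n)) x := by
  set c : ℕ → ℝ := fun n =>
    x ^ ((μ - 1)/2) * exp (-x) * x ^ n / ((Nat.factorial n : ℝ) * Real.Gamma (μ + n)) with hc
  have hμn : ∀ n : ℕ, (0:ℝ) < μ + n := fun n => by positivity
  have hΓpos : ∀ n : ℕ, 0 < Real.Gamma (μ + n) := fun n => Real.Gamma_pos_of_pos (hμn n)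
  have hpt : ∀ t ∈ Ioi y,
      t ^ ((μ - 1) / 2) * Real.exp (-t - x) * besselI (μ - 1) (2 * Real.sqrt (x * t))
        = ∑' n : ℕ, c n * (exp (-t) * t ^ ((μ + n) - 1)) := by
    intro t ht
    have htpos : (0:ℝ) < t := hy.trans ht
    rw [besselI]
    rw [← tsum_mul_left]
    apply tsum_congr
    intro n
    have hu : (0:ℝ) < x * t := mul_pos hx htpos
    have hdiv : 2 * Real.sqrt (x * t) / 2 = Real.sqrt (x * t) := by ring
    have hkey : (Real.sqrt (x * t)) ^ (μ - 1 + 2 * (n : ℝ))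
        = x ^ ((μ - 1)/2) * x ^ n * (t ^ ((μ + n) - 1) / t ^ ((μ - 1)/2)) := by
      rw [Real.sqrt_eq_rpow, ← Real.rpow_mul hu.le,
        show (1/2 : ℝ) * (μ - 1 + 2 * (n:ℝ)) = (μ - 1)/2 + (n:ℝ) from by ring,
        Real.mul_rpow hx.le htpos.le, Real.rpow_add hx, Real.rpow_natCast,
        show ((μ - 1)/2 + (n:ℝ)) = ((μ + n) - 1) - (μ - 1)/2 from by ring,
        Real.rpow_sub htpos]
    have hΓ : Real.Gamma (μ - 1 + (n:ℝ) + 1) = Real.Gamma (μ + n) := by ring_nf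
    rw [hdiv, hkey, hΓ, hc]
    have hexp : Real.exp (-t - x) = exp (-t) * exp (-x) := by
      rw [show -t - x = -t + -x from by ring, Real.exp_add]
    rw [hexp]
    have htne : t ^ ((μ - 1)/2) ≠ 0 := (Real.rpow_pos_of_pos htpos _).ne'
    field_simp
  have hInt : (∫ t in Ioi y, t ^ ((μ - 1) / 2) * Real.exp (-t - x) *
      besselI (μ - 1) (2 * Real.sqrt (x * t)))
      = ∑' n : ℕ, c n * ∫ t in Ioi y, exp (-t) * t ^ ((μ + n) - 1) := by
    rw [setIntegral_congr_fun measurableSet_Ioi hpt]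
    rw [← MeasureTheory.integral_tsum_of_summable_integral_norm]
    · exact tsum_congr fun n => MeasureTheory.integral_const_mul _ _
    · intro n
      exact ((tail_integrable hy (hμn n)).const_mul (c n))
    · apply Summable.of_nonneg_of_le (fun n => integral_nonneg fun t => norm_nonneg _)
        (fun n => ?_) (((Real.summable_pow_div_factorial x).mul_left
          (x ^ ((μ - 1)/2) * exp (-x))))
      have h1 : (∫ t in Ioi y, ‖c n * (exp (-t) * t ^ ((μ + n) - 1))‖)
          = |c n| * ∫ t in Ioi y, exp (-t) * t ^ ((μ + n) - 1) := by
        rw [MeasureTheory.integral_congr_ae (g := fun t => |c n| * (exp (-t) * t ^ ((μ + n) - 1)))]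
        · exact MeasureTheory.integral_const_mul _ _
        · filter_upwards [ae_restrict_mem measurableSet_Ioi] with t ht
          have htpos : (0:ℝ) < t := hy.trans ht
          rw [Real.norm_eq_abs, abs_mul]
          congr 1
          rw [abs_of_nonneg (by positivity)]
      rw [h1]
      have h2 : |c n| = c n := abs_of_nonneg (by
        rw [hc]
        have := (hΓpos n).le
        positivity)
      rw [h2]
      calc c n * ∫ t in Ioi y, exp (-t) * t ^ ((μ + n) - 1)
          ≤ c n * Real.Gamma (μ + n) := by
            apply mul_le_mul_of_nonneg_left (tail_le_Gamma hy (hμn n))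
            rw [hc]; have := (hΓpos n).le; positivity
        _ = x ^ ((μ - 1)/2) * exp (-x) * (x ^ n / (Nat.factorial n : ℝ)) := by
            rw [hc]
            field_simp
  rw [marcumQ, hInt, ← tsum_mul_left, mySum, ← tsum_mul_left]
  apply tsum_congr
  intro n
  rw [hc]
  have hxpow : x ^ ((1 - μ)/2) * x ^ ((μ - 1)/2) = 1 := by
    rw [← Real.rpow_add hx, show ((1 - μ)/2 + (μ - 1)/2) = 0 from by ring, Real.rpow_zero]
  have hΓne := (hΓpos n).ne'
  have hfne : ((Nat.factorial n : ℝ)) ≠ 0 := by positivity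
  linear_combination ((Real.exp (-x) * x ^ n *
    (∫ t in Ioi y, exp (-t) * t ^ ((μ + n) - 1)) /
      ((Nat.factorial n : ℝ) * Real.Gamma (μ + n)))) * hxpow

theorem marcumQ_strict_concave_x (μ y : ℝ) (hμ : 0 < μ) (hy0 : 0 < y) (hy : y < μ + 1) :
    StrictConcaveOn ℝ (Set.Ioi 0) (fun x => marcumQ μ x y) ∧
      ∀ x : ℝ, 0 < x → deriv (deriv (fun x' => marcumQ μ x' y)) x < 0 := by
  have hμn : ∀ n : ℕ, (0:ℝ) < μ + n := fun n => by positivity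
  have hΓpos : ∀ n : ℕ, 0 < Real.Gamma (μ + n) := fun n => Real.Gamma_pos_of_pos (hμn n)
  set g : ℕ → ℝ := fun n => (∫ t in Ioi y, exp (-t) * t ^ ((μ + n) - 1)) / Real.Gamma (μ + n)
    with hg
  have hg_bound : ∀ n, |g n| ≤ 1 := by
    intro n
    rw [hg, abs_div, abs_of_nonneg (tail_nonneg hy0 _), abs_of_pos (hΓpos n),
      div_le_one (hΓpos n)]
    exact tail_le_Gamma hy0 (hμn n)
  set d : ℕ → ℝ := fun n => g (n + 1) - g n with hd
  have hd_bound : ∀ n, |d n| ≤ 2 := by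
    intro n
    calc |d n| ≤ |g (n+1)| + |g n| := abs_sub _ _
      _ ≤ 1 + 1 := add_le_add (hg_bound _) (hg_bound _)
      _ = 2 := by norm_num
  -- explicit formula for d
  have hd_eq : ∀ n : ℕ, d n = y ^ (μ + n) * exp (-y) / Real.Gamma ((μ + n) + 1) := by
    intro n
    have hrec := tail_rec hy0 (hμn n)
    have hΓ1 : Real.Gamma ((μ + n) + 1) = (μ + n) * Real.Gamma (μ + n) :=
      Real.Gamma_add_one (hμn n).ne'
    have hcast : ((n+1:ℕ):ℝ) = (n:ℝ) + 1 := by push_cast; ring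
    simp only [hd, hg]
    rw [hcast, show μ + ((n:ℝ) + 1) = μ + n + 1 from by ring, hrec, hΓ1]
    have h1 := (hΓpos n).ne'
    have h2 := (hμn n).ne'
    field_simp
    ring
  have hd_pos : ∀ n, 0 < d n := by
    intro n
    rw [hd_eq n]
    have hΓ1 : 0 < Real.Gamma ((μ + n) + 1) := Real.Gamma_pos_of_pos (by positivity)
    positivity
  -- second differences are negative
  have he_neg : ∀ n : ℕ, d (n + 1) - d n < 0 := by
    intro n
    have h1 : d (n + 1) = d n * (y / ((μ + n) + 1)) := by
      rw [hd_eq n, hd_eq (n+1)]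
      have hcast : ((n+1:ℕ):ℝ) = (n:ℝ) + 1 := by push_cast; ring
      rw [hcast, show μ + ((n:ℝ) + 1) = μ + n + 1 from by ring]
      have hΓ2 : Real.Gamma (((μ + n) + 1) + 1) = ((μ + n) + 1) * Real.Gamma ((μ + n) + 1) :=
        Real.Gamma_add_one (by positivity)
      rw [hΓ2, Real.rpow_add hy0, Real.rpow_one]
      have h3 : ((μ + (n:ℝ)) + 1) ≠ 0 := by positivity
      have h4 : Real.Gamma ((μ + n) + 1) ≠ 0 := (Real.Gamma_pos_of_pos (by positivity)).ne'
      field_simp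
    rw [h1]
    have h5 : y / ((μ + n) + 1) < 1 := by
      rw [div_lt_one (by positivity)]
      have : (0:ℝ) ≤ (n:ℝ) := Nat.cast_nonneg n
      linarith
    have h6 : d n * (y / ((μ + n) + 1)) < d n * 1 := mul_lt_mul_of_pos_left h5 (hd_pos n)
    rw [mul_one] at h6
    linarith
  set e : ℕ → ℝ := fun n => d (n + 1) - d n with he
  have he_bound : ∀ n, |e n| ≤ 4 := by
    intro n
    calc |e n| ≤ |d (n+1)| + |d n| := abs_sub _ _
      _ ≤ 2 + 2 := add_le_add (hd_bound _) (hd_bound _)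
      _ = 4 := by norm_num
  -- the smooth model function and its derivatives
  set f : ℝ → ℝ := fun x => exp (-x) * mySum g x with hf
  set f1 : ℝ → ℝ := fun x => exp (-x) * mySum d x with hf1
  set f2 : ℝ → ℝ := fun x => exp (-x) * mySum e x with hf2
  have hder1 : ∀ x : ℝ, HasDerivAt f (f1 x) x := fun x => expMySum_hasDerivAt hg_bound x
  have hder2 : ∀ x : ℝ, HasDerivAt f1 (f2 x) x := fun x => expMySum_hasDerivAt hd_bound x
  -- f2 is negative on positive reals
  have hf2neg : ∀ x : ℝ, 0 < x → f2 x < 0 := by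
    intro x hx
    rw [hf2]
    have hsum : (mySum e x) < 0 := by
      have hlt : (∑' n, e n * x ^ n / (Nat.factorial n : ℝ)) < ∑' _ : ℕ, (0:ℝ) := by
        apply Summable.tsum_lt_tsum (i := 0)
        · intro n
          exact le_of_lt (div_neg_of_neg_of_pos
            (mul_neg_of_neg_of_pos (he_neg n) (pow_pos hx n))
            (by positivity : (0:ℝ) < (Nat.factorial n : ℝ)))
        · exact div_neg_of_neg_of_pos
            (mul_neg_of_neg_of_pos (he_neg 0) (pow_pos hx 0))
            (by positivity : (0:ℝ) < (Nat.factorial 0 : ℝ))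
        · exact mySum_summable he_bound x
        · exact summable_zero
      simpa [mySum] using hlt
    exact mul_neg_of_pos_of_neg (Real.exp_pos (-x)) hsum
  -- marcumQ agrees with f on Ioi 0
  have hEq : EqOn (fun x => marcumQ μ x y) f (Ioi 0) := by
    intro x hx
    exact marcumQ_eq_series μ y hμ hy0 hx
  have hQderiv2 : ∀ x : ℝ, 0 < x → deriv (deriv (fun x' => marcumQ μ x' y)) x = f2 x := by
    intro x hx
    have hnhds : Ioi (0:ℝ) ∈ nhds x := isOpen_Ioi.mem_nhds hx
    have hev : (fun x => marcumQ μ x y) =ᶠ[nhds x] f := eventuallyEq_of_mem hnhds hEq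
    have hdf : deriv f = f1 := funext fun z => (hder1 z).deriv
    have hev2 : deriv (fun x => marcumQ μ x y) =ᶠ[nhds x] f1 := by
      have := hev.deriv
      rwa [hdf] at this
    calc deriv (deriv (fun x' => marcumQ μ x' y)) x = deriv f1 x := hev2.deriv_eq
      _ = f2 x := (hder2 x).deriv
  constructor
  · apply strictConcaveOn_of_deriv2_neg (convex_Ioi 0)
    · apply ContinuousOn.congr _ hEq
      exact Continuous.continuousOn (continuous_iff_continuousAt.mpr
        fun z => (hder1 z).continuousAt)
    · intro x hx
      rw [interior_Ioi] at hx
      have : deriv^[2] (fun x' => marcumQ μ x' y) x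
          = deriv (deriv (fun x' => marcumQ μ x' y)) x := by
        simp [Function.iterate_succ, Function.iterate_zero]
      rw [this, hQderiv2 x hx]
      exact hf2neg x hx
  · intro x hx
    rw [hQderiv2 x hx]
    exact hf2neg x hx
end

section
/- The Bessel function ratio c_ν(x,y) = √(y/x) · I_ν(2√(xy))/I_{ν−1}(2√(xy)) is, for fixed ν ≥ 1 and y > 0, a decreasing function of x on (0,∞), and for fixed x > 0 an increasing function of y; moreover lim_{x→0⁺} c_ν(x,y) = y/ν. -/
open Real MeasureTheory Set Filter

/- ---------- Auxiliary development ---------- -/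

noncomputable def coefA (ν : ℝ) (n : ℕ) : ℝ :=
  ((Nat.factorial n : ℝ) * Real.Gamma (ν + (n : ℝ) + 1))⁻¹

noncomputable def Sb (ν t : ℝ) : ℝ := ∑' n : ℕ, coefA ν n * t ^ n

lemma coefA_pos (ν : ℝ) (hν : 0 ≤ ν) (n : ℕ) : 0 < coefA ν n := by
  apply inv_pos.mpr
  apply mul_pos (by positivity)
  exact Real.Gamma_pos_of_pos (by positivity)

lemma Sb_summable (ν t : ℝ) (hν : 0 ≤ ν) (ht : 0 ≤ t) :
    Summable fun n : ℕ => coefA ν n * t ^ n := by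
  simp only [coefA]
  apply summable_of_ratio_norm_eventually_le (r := 1/2) (by norm_num)
  filter_upwards [eventually_ge_atTop ⌈2 * t⌉₊] with n hn
  have h1 : (0:ℝ) < ν + n + 1 := by positivity
  have hg : Real.Gamma (ν + (n:ℝ) + 1) > 0 := Real.Gamma_pos_of_pos h1
  have hgs : Real.Gamma (ν + ((n:ℕ)+1:ℕ) + 1) = (ν + n + 1) * Real.Gamma (ν + n + 1) := by
    push_cast
    rw [show ν + ((n:ℝ)+1) + 1 = (ν + n + 1) + 1 by ring, Real.Gamma_add_one h1.ne']
  have hg' : Real.Gamma (ν + ((n:ℕ)+1:ℕ) + 1) > 0 := by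
    rw [hgs]; positivity
  have key : ((Nat.factorial (n+1) : ℝ) * Real.Gamma (ν + ((n:ℕ)+1:ℕ) + 1))⁻¹ * t ^ (n+1)
      ≤ 1/2 * (((Nat.factorial n : ℝ) * Real.Gamma (ν + (n:ℝ) + 1))⁻¹ * t ^ n) := by
    rw [hgs, Nat.factorial_succ]
    push_cast
    have h2t : t ≤ (n+1)/2 := by
      have := Nat.ceil_le.mp hn
      linarith
    have hν1 : (1:ℝ) ≤ ν + n + 1 := by
      have : (0:ℝ) ≤ (n:ℝ) := Nat.cast_nonneg n
      linarith
    have hfac : (0:ℝ) < (Nat.factorial n : ℝ) := by positivity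
    rw [pow_succ]
    simp only [mul_inv]
    have e1 : ((n:ℝ)+1)⁻¹ * (Nat.factorial n : ℝ)⁻¹ * ((ν + n + 1)⁻¹ * (Real.Gamma (ν+n+1))⁻¹) * (t^n * t)
        = (((n:ℝ)+1)⁻¹ * (ν+n+1)⁻¹ * t) * ((Nat.factorial n : ℝ)⁻¹ * (Real.Gamma (ν+n+1))⁻¹ * t^n) := by
      ring
    rw [e1]
    apply mul_le_mul_of_nonneg_right _ (by positivity)
    have hb : ((n:ℝ)+1)⁻¹ * (ν+n+1)⁻¹ * t ≤ ((n:ℝ)+1)⁻¹ * 1 * t := by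
      apply mul_le_mul_of_nonneg_right _ ht
      apply mul_le_mul_of_nonneg_left _ (by positivity)
      exact inv_le_one_of_one_le₀ hν1
    calc ((n:ℝ)+1)⁻¹ * (ν+n+1)⁻¹ * t ≤ ((n:ℝ)+1)⁻¹ * 1 * t := hb
      _ = t / (n+1) := by ring
      _ ≤ ((n+1)/2) / (n+1) := by
          apply div_le_div_of_nonneg_right h2t (by positivity) |>.trans_eq rfl
      _ = 1/2 := by field_simp
  calc ‖((Nat.factorial (n+1) : ℝ) * Real.Gamma (ν + ((n:ℕ)+1:ℕ) + 1))⁻¹ * t ^ (n+1)‖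
      = ((Nat.factorial (n+1) : ℝ) * Real.Gamma (ν + ((n:ℕ)+1:ℕ) + 1))⁻¹ * t ^ (n+1) := by
        rw [Real.norm_of_nonneg]
        positivity
    _ ≤ 1/2 * (((Nat.factorial n : ℝ) * Real.Gamma (ν + (n:ℝ) + 1))⁻¹ * t ^ n) := key
    _ = 1/2 * ‖((Nat.factorial n : ℝ) * Real.Gamma (ν + (n:ℝ) + 1))⁻¹ * t ^ n‖ := by
        rw [Real.norm_of_nonneg]
        positivity

lemma Sb_pos (ν t : ℝ) (hν : 0 ≤ ν) (ht : 0 ≤ t) : 0 < Sb ν t := by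
  apply Summable.tsum_pos (Sb_summable ν t hν ht)
    (fun n => mul_nonneg (coefA_pos ν hν n).le (pow_nonneg ht n)) 0
  simpa using (coefA_pos ν hν 0)

set_option maxHeartbeats 1000000 in
lemma key_lemma (a b : ℕ → ℝ) (ha : ∀ n, 0 ≤ a n) (hb : ∀ n, 0 ≤ b n)
    (s t : ℝ) (hs : 0 < s) (hst : s < t)
    (hab : ∀ m n : ℕ, m < n → a n * b m < a m * b n)
    (has : Summable fun n => a n * s ^ n) (hat : Summable fun n => a n * t ^ n)
    (hbs : Summable fun n => b n * s ^ n) (hbt : Summable fun n => b n * t ^ n) :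
    (∑' n, a n * t ^ n) * (∑' n, b n * s ^ n) < (∑' n, a n * s ^ n) * (∑' n, b n * t ^ n) := by
  have ht : 0 < t := hs.trans hst
  have hnorm : ∀ (c : ℕ → ℝ), (∀ n, 0 ≤ c n) → ∀ u : ℝ, 0 ≤ u →
      Summable (fun n => c n * u ^ n) → Summable (fun n => ‖c n * u ^ n‖) := by
    intro c hc u hu hsum
    refine hsum.congr fun n => ?_
    rw [Real.norm_of_nonneg (mul_nonneg (hc n) (pow_nonneg hu n))]
  set f : ℕ × ℕ → ℝ := fun p => a p.1 * b p.2 * (s ^ p.1 * t ^ p.2 - t ^ p.1 * s ^ p.2) with hf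
  have hsum1 : Summable (fun p : ℕ × ℕ => (a p.1 * s ^ p.1) * (b p.2 * t ^ p.2)) :=
    summable_mul_of_summable_norm (hnorm a ha s hs.le has) (hnorm b hb t ht.le hbt)
  have hsum2 : Summable (fun p : ℕ × ℕ => (a p.1 * t ^ p.1) * (b p.2 * s ^ p.2)) :=
    summable_mul_of_summable_norm (hnorm a ha t ht.le hat) (hnorm b hb s hs.le hbs)
  have hfsum : Summable f := by
    have : f = fun p : ℕ × ℕ => (a p.1 * s ^ p.1) * (b p.2 * t ^ p.2)
        - (a p.1 * t ^ p.1) * (b p.2 * s ^ p.2) := by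
      funext p; simp only [hf]; ring
    rw [this]; exact hsum1.sub hsum2
  have htsum : (∑' n, a n * s ^ n) * (∑' n, b n * t ^ n)
      - (∑' n, a n * t ^ n) * (∑' n, b n * s ^ n) = ∑' p : ℕ × ℕ, f p := by
    rw [tsum_mul_tsum_of_summable_norm (hnorm a ha s hs.le has) (hnorm b hb t ht.le hbt),
        tsum_mul_tsum_of_summable_norm (hnorm a ha t ht.le hat) (hnorm b hb s hs.le hbs),
        ← Summable.tsum_sub hsum1 hsum2]
    congr 1; funext p; simp only [hf]; ring
  have hswap : Summable (fun p : ℕ × ℕ => f p.swap) := hfsum.prod_symm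
  have hg : Summable (fun p : ℕ × ℕ => f p + f p.swap) := hfsum.add hswap
  have hpowlt : ∀ m n : ℕ, m < n → t ^ m * s ^ n < s ^ m * t ^ n := by
    intro m n hmn
    have e : n = m + (n - m) := by omega
    rw [e, pow_add, pow_add]
    have h3 : s ^ (n - m) < t ^ (n - m) := pow_lt_pow_left₀ hst hs.le (by omega)
    nlinarith [mul_pos (pow_pos hs m) (pow_pos ht m), pow_pos hs (n - m), pow_pos ht (n - m)]
  have hgpos : ∀ p : ℕ × ℕ, 0 ≤ f p + f p.swap := by
    have key : ∀ m n : ℕ, m < n → 0 ≤ f (m, n) + f (m, n).swap := by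
      intro m n hmn
      have h1 : 0 < a m * b n - a n * b m := sub_pos.mpr (hab m n hmn)
      have h2 : 0 < s ^ m * t ^ n - t ^ m * s ^ n := sub_pos.mpr (hpowlt m n hmn)
      have e : f (m, n) + f (m, n).swap
          = (a m * b n - a n * b m) * (s ^ m * t ^ n - t ^ m * s ^ n) := by
        simp only [hf, Prod.swap_prod_mk]; ring
      rw [e]; positivity
    intro ⟨m, n⟩
    rcases lt_trichotomy m n with h | h | h
    · exact key m n h
    · subst h
      have e : f (m, m) + f (m, m).swap = 0 := by
        simp only [hf, Prod.swap_prod_mk]; ring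
      rw [e]
    · have h0 := key n m h
      have e : f (n, m) + f (n, m).swap = f (m, n) + f (m, n).swap := by
        simp only [hf, Prod.swap_prod_mk]; ring
      rw [e] at h0; exact h0
  have hg01 : 0 < f (0, 1) + f (0, 1).swap := by
    have h1 : a 1 * b 0 < a 0 * b 1 := hab 0 1 one_pos
    have e : f (0, 1) + f (0, 1).swap = (a 0 * b 1 - a 1 * b 0) * (t - s) := by
      simp only [hf, Prod.swap_prod_mk]; ring
    rw [e]
    exact mul_pos (sub_pos.mpr h1) (sub_pos.mpr hst)
  have hpos : 0 < ∑' p : ℕ × ℕ, (f p + f p.swap) := Summable.tsum_pos hg hgpos (0, 1) hg01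
  have hsplit : ∑' p : ℕ × ℕ, (f p + f p.swap)
      = (∑' p : ℕ × ℕ, f p) + (∑' p : ℕ × ℕ, f p.swap) := Summable.tsum_add hfsum hswap
  have hswapeq : (∑' p : ℕ × ℕ, f p.swap) = ∑' p : ℕ × ℕ, f p :=
    (Equiv.prodComm ℕ ℕ).tsum_eq f
  linarith

lemma besselI_eq_s11 (ν z : ℝ) (hz : 0 < z) :
    besselI ν (2 * Real.sqrt z) = z ^ (ν / 2) * Sb ν z := by
  rw [besselI, Sb, ← tsum_mul_left]
  congr 1; funext n
  have h2 : 2 * Real.sqrt z / 2 = Real.sqrt z := by ring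
  rw [h2, Real.sqrt_eq_rpow, ← Real.rpow_mul hz.le,
      show (1/2:ℝ) * (ν + 2*(n:ℝ)) = ν/2 + n by ring,
      Real.rpow_add hz, Real.rpow_natCast, coefA, div_eq_mul_inv]
  ring

lemma besselRatioC_eq (ν x y : ℝ) (hx : 0 < x) (hy : 0 < y) :
    besselRatioC ν x y = y * Sb ν (x*y) / Sb (ν-1) (x*y) := by
  have hxy : 0 < x*y := mul_pos hx hy
  rw [besselRatioC, besselI_eq_s11 ν _ hxy, besselI_eq_s11 (ν-1) _ hxy]
  have key : Real.sqrt (y/x) * (x*y) ^ (ν/2) = y * (x*y) ^ ((ν-1)/2) := by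
    have e1 : (x*y) ^ (ν/2) = (x*y) ^ ((1:ℝ)/2) * (x*y) ^ ((ν-1)/2) := by
      rw [← Real.rpow_add hxy]; congr 1; ring
    rw [e1, ← mul_assoc, ← Real.sqrt_eq_rpow, ← Real.sqrt_mul (by positivity)]
    rw [show y/x*(x*y) = y*y by field_simp, Real.sqrt_mul_self hy.le]
  set K := (x*y) ^ ((ν-1)/2) with hK
  have hKpos : 0 < K := Real.rpow_pos_of_pos hxy _
  rw [← mul_assoc, key]
  rw [show y * K * Sb ν (x*y) = K * (y * Sb ν (x*y)) by ring]
  rw [mul_div_mul_left _ _ hKpos.ne']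

lemma coefA_shift (ν : ℝ) (n : ℕ) :
    coefA (ν-1) n = ((Nat.factorial n : ℝ) * Real.Gamma (ν + n))⁻¹ := by
  rw [coefA, show ν - 1 + (n:ℝ) + 1 = ν + n by ring]

lemma hab_a (ν : ℝ) (hν : 1 ≤ ν) (m n : ℕ) (hmn : m < n) :
    coefA ν n * coefA (ν-1) m < coefA ν m * coefA (ν-1) n := by
  have hν0 : (0:ℝ) < ν := lt_of_lt_of_le one_pos hν
  have hm : (0:ℝ) < ν + m := by positivity
  have hn : (0:ℝ) < ν + n := by positivity
  have hGm : (0:ℝ) < Real.Gamma (ν + m) := Real.Gamma_pos_of_pos hm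
  have hGn : (0:ℝ) < Real.Gamma (ν + n) := Real.Gamma_pos_of_pos hn
  have em : Real.Gamma (ν + (m:ℝ) + 1) = (ν + m) * Real.Gamma (ν + m) :=
    Real.Gamma_add_one hm.ne'
  have en : Real.Gamma (ν + (n:ℝ) + 1) = (ν + n) * Real.Gamma (ν + n) :=
    Real.Gamma_add_one hn.ne'
  simp only [coefA_shift]
  simp only [coefA]
  rw [em, en, ← mul_inv, ← mul_inv]
  apply inv_strictAnti₀
  · positivity
  · have hmn' : (m:ℝ) < (n:ℝ) := Nat.cast_lt.mpr hmn
    have hfm : (0:ℝ) < (Nat.factorial m : ℝ) := by positivity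
    have hfn : (0:ℝ) < (Nat.factorial n : ℝ) := by positivity
    nlinarith [mul_pos (mul_pos (mul_pos hfm hfn) hGm) hGn]

lemma hab_b (ν : ℝ) (hν : 1 ≤ ν) (m n : ℕ) (hmn : m < n) :
    coefA (ν-1) n * ((m:ℝ) * coefA (ν-1) m) < coefA (ν-1) m * ((n:ℝ) * coefA (ν-1) n) := by
  have hν' : (0:ℝ) ≤ ν - 1 := by linarith
  have pm := coefA_pos (ν-1) hν' m
  have pn := coefA_pos (ν-1) hν' n
  have hmn' : (m:ℝ) < (n:ℝ) := Nat.cast_lt.mpr hmn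
  nlinarith [mul_pos pm pn]

lemma coefA_rec (ν : ℝ) (hν : 1 ≤ ν) (n : ℕ) :
    ((n:ℝ)+1) * coefA (ν-1) (n+1) = coefA ν n := by
  have h1 : (0:ℝ) < ν + n + 1 := by positivity
  have hG : Real.Gamma (ν + n + 1) ≠ 0 := (Real.Gamma_pos_of_pos h1).ne'
  have hfac : ((Nat.factorial n : ℝ)) ≠ 0 := by positivity
  rw [coefA_shift, coefA]
  push_cast [Nat.factorial_succ]
  rw [show ν + ((n:ℝ) + 1) = ν + n + 1 by ring]
  field_simp

lemma tilt_summable (ν u : ℝ) (hν : 1 ≤ ν) (hu : 0 ≤ u) :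
    Summable (fun n : ℕ => ((n:ℝ) * coefA (ν-1) n) * u ^ n) := by
  have hν0 : (0:ℝ) ≤ ν := by linarith
  have point : ∀ n : ℕ, ((↑(n+1):ℝ) * coefA (ν-1) (n+1)) * u ^ (n+1)
      = u * (coefA ν n * u ^ n) := by
    intro n
    rw [show ((↑(n+1):ℝ)) = (n:ℝ)+1 by push_cast; ring, coefA_rec ν hν n, pow_succ]
    ring
  have hsum1 : Summable (fun n : ℕ => ((↑(n+1):ℝ) * coefA (ν-1) (n+1)) * u ^ (n+1)) :=
    ((Sb_summable ν u hν0 hu).mul_left u).congr fun n => (point n).symm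
  exact (summable_nat_add_iff 1).mp hsum1

lemma mul_Sb (ν u : ℝ) (hν : 1 ≤ ν) (hu : 0 ≤ u) :
    (∑' n : ℕ, ((n:ℝ) * coefA (ν-1) n) * u ^ n) = u * Sb ν u := by
  have hν0 : (0:ℝ) ≤ ν := by linarith
  have point : ∀ n : ℕ, ((↑(n+1):ℝ) * coefA (ν-1) (n+1)) * u ^ (n+1)
      = u * (coefA ν n * u ^ n) := by
    intro n
    rw [show ((↑(n+1):ℝ)) = (n:ℝ)+1 by push_cast; ring, coefA_rec ν hν n, pow_succ]
    ring
  rw [Summable.tsum_eq_zero_add (tilt_summable ν u hν hu)]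
  simp only [Nat.cast_zero, zero_mul, pow_zero, mul_one, zero_add]
  rw [tsum_congr point, tsum_mul_left, Sb]

lemma Sb_cross (ν : ℝ) (hν : 1 ≤ ν) (s t : ℝ) (hs : 0 < s) (hst : s < t) :
    Sb ν t * Sb (ν-1) s < Sb ν s * Sb (ν-1) t := by
  have hν0 : (0:ℝ) ≤ ν := by linarith
  have hν1 : (0:ℝ) ≤ ν - 1 := by linarith
  have ht : 0 < t := hs.trans hst
  exact key_lemma (coefA ν) (coefA (ν-1))
    (fun n => (coefA_pos ν hν0 n).le) (fun n => (coefA_pos (ν-1) hν1 n).le)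
    s t hs hst (hab_a ν hν)
    (Sb_summable ν s hν0 hs.le) (Sb_summable ν t hν0 ht.le)
    (Sb_summable (ν-1) s hν1 hs.le) (Sb_summable (ν-1) t hν1 ht.le)

lemma Sb_cross2 (ν : ℝ) (hν : 1 ≤ ν) (s t : ℝ) (hs : 0 < s) (hst : s < t) :
    s * Sb ν s * Sb (ν-1) t < t * Sb ν t * Sb (ν-1) s := by
  have hν0 : (0:ℝ) ≤ ν := by linarith
  have hν1 : (0:ℝ) ≤ ν - 1 := by linarith
  have ht : 0 < t := hs.trans hst
  have key := key_lemma (coefA (ν-1)) (fun n : ℕ => (n:ℝ) * coefA (ν-1) n)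
    (fun n => (coefA_pos (ν-1) hν1 n).le)
    (fun n => mul_nonneg (Nat.cast_nonneg n) (coefA_pos (ν-1) hν1 n).le)
    s t hs hst (hab_b ν hν)
    (Sb_summable (ν-1) s hν1 hs.le) (Sb_summable (ν-1) t hν1 ht.le)
    (tilt_summable ν s hν hs.le) (tilt_summable ν t hν ht.le)
  rw [mul_Sb ν s hν hs.le, mul_Sb ν t hν ht.le] at key
  have e1 : (∑' n : ℕ, coefA (ν-1) n * s ^ n) = Sb (ν-1) s := rfl
  have e2 : (∑' n : ℕ, coefA (ν-1) n * t ^ n) = Sb (ν-1) t := rfl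
  rw [e1, e2] at key
  nlinarith [key]

set_option maxHeartbeats 1000000 in
lemma Sb_tendsto (μ : ℝ) (hμ : 0 ≤ μ) (y : ℝ) (hy : 0 < y) :
    Filter.Tendsto (fun x => Sb μ (x*y)) (nhdsWithin 0 (Set.Ioi 0))
      (nhds (Real.Gamma (μ+1))⁻¹) := by
  have h0 : coefA μ 0 = (Real.Gamma (μ+1))⁻¹ := by
    simp [coefA]
  have hsumc : Summable (fun n : ℕ => coefA μ n) := by
    have := Sb_summable μ 1 hμ zero_le_one
    simpa using this
  have hsum1 : Summable (fun n : ℕ => coefA μ (n+1)) := (summable_nat_add_iff 1).mpr hsumc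
  set K := ∑' n : ℕ, coefA μ (n+1) with hKdef
  have hKnn : 0 ≤ K := tsum_nonneg fun n => (coefA_pos μ hμ (n+1)).le
  have bounds : ∀ u : ℝ, 0 < u → u ≤ 1 →
      (Real.Gamma (μ+1))⁻¹ ≤ Sb μ u ∧ Sb μ u ≤ (Real.Gamma (μ+1))⁻¹ + u * K := by
    intro u hu hu1
    have hsum := Sb_summable μ u hμ hu.le
    constructor
    · have := Summable.le_tsum hsum 0
        (fun j _ => mul_nonneg (coefA_pos μ hμ j).le (pow_nonneg hu.le j))
      simpa [h0, Sb] using this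
    · have hshift : Summable (fun n : ℕ => coefA μ (n+1) * u ^ (n+1)) :=
        (summable_nat_add_iff 1).mpr hsum
      have hbound : ∀ n : ℕ, coefA μ (n+1) * u ^ (n+1) ≤ u * coefA μ (n+1) := by
        intro n
        rw [pow_succ']
        have h1 : u ^ n ≤ 1 := pow_le_one₀ hu.le hu1
        have h2 : 0 < coefA μ (n+1) := coefA_pos μ hμ (n+1)
        calc coefA μ (n+1) * (u * u ^ n) ≤ coefA μ (n+1) * (u * 1) := by
              apply mul_le_mul_of_nonneg_left _ h2.le
              exact mul_le_mul_of_nonneg_left h1 hu.le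
          _ = u * coefA μ (n+1) := by ring
      have hle : (∑' n : ℕ, coefA μ (n+1) * u ^ (n+1)) ≤ ∑' n : ℕ, u * coefA μ (n+1) :=
        Summable.tsum_le_tsum hbound hshift (hsum1.mul_left u)
      rw [tsum_mul_left] at hle
      have : Sb μ u = coefA μ 0 + ∑' n : ℕ, coefA μ (n+1) * u ^ (n+1) := by
        rw [Sb, Summable.tsum_eq_zero_add hsum]
        simp
      rw [this, h0]
      linarith
  have hupper : Filter.Tendsto (fun x : ℝ => (Real.Gamma (μ+1))⁻¹ + (x*y) * K)
      (nhdsWithin 0 (Set.Ioi 0)) (nhds ((Real.Gamma (μ+1))⁻¹)) := by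
    have : Filter.Tendsto (fun x : ℝ => (Real.Gamma (μ+1))⁻¹ + (x*y) * K)
        (nhds 0) (nhds ((Real.Gamma (μ+1))⁻¹ + (0*y) * K)) := by
      apply Filter.Tendsto.add tendsto_const_nhds
      exact ((continuous_id.mul continuous_const).mul continuous_const).tendsto 0
    simpa using this.mono_left nhdsWithin_le_nhds
  apply tendsto_of_tendsto_of_tendsto_of_le_of_le' tendsto_const_nhds hupper
  · filter_upwards [Ioo_mem_nhdsGT_of_mem
      (Set.left_mem_Ico.mpr (by positivity : (0:ℝ) < 1/y))] with x hx
    have hu : 0 < x * y := mul_pos hx.1 hy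
    have hu1 : x * y ≤ 1 := by
      have := hx.2
      rw [lt_div_iff₀ hy] at this
      linarith
    exact (bounds (x*y) hu hu1).1
  · filter_upwards [Ioo_mem_nhdsGT_of_mem
      (Set.left_mem_Ico.mpr (by positivity : (0:ℝ) < 1/y))] with x hx
    have hu : 0 < x * y := mul_pos hx.1 hy
    have hu1 : x * y ≤ 1 := by
      have := hx.2
      rw [lt_div_iff₀ hy] at this
      linarith
    exact (bounds (x*y) hu hu1).2

theorem besselRatioC_monotonicity (ν : ℝ) (hν : 1 ≤ ν) :
    (∀ y : ℝ, 0 < y → StrictAntiOn (fun x => besselRatioC ν x y) (Set.Ioi 0)) ∧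
    (∀ x : ℝ, 0 < x → StrictMonoOn (fun y => besselRatioC ν x y) (Set.Ioi 0)) ∧
    (∀ y : ℝ, 0 < y →
      Filter.Tendsto (fun x => besselRatioC ν x y) (nhdsWithin 0 (Set.Ioi 0)) (nhds (y / ν))) := by
  have hν0 : (0:ℝ) < ν := lt_of_lt_of_le one_pos hν
  have hν1 : (0:ℝ) ≤ ν - 1 := by linarith
  refine ⟨?_, ?_, ?_⟩
  · intro y hy x1 hx1 x2 hx2 h12
    simp only [Set.mem_Ioi] at hx1 hx2
    simp only []
    rw [besselRatioC_eq ν x1 y hx1 hy, besselRatioC_eq ν x2 y hx2 hy]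
    have hu1 : 0 < x1 * y := mul_pos hx1 hy
    have hu12 : x1 * y < x2 * y := by
      apply mul_lt_mul_of_pos_right h12 hy
    have hS1 := Sb_pos (ν-1) (x1*y) hν1 hu1.le
    have hS2 := Sb_pos (ν-1) (x2*y) hν1 (hu1.trans hu12).le
    rw [div_lt_div_iff₀ hS2 hS1]
    have key := Sb_cross ν hν (x1*y) (x2*y) hu1 hu12
    nlinarith [key]
  · intro x hx y1 hy1 y2 hy2 h12
    simp only [Set.mem_Ioi] at hy1 hy2 hx
    simp only []
    rw [besselRatioC_eq ν x y1 hx hy1, besselRatioC_eq ν x y2 hx hy2]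
    have hu1 : 0 < x * y1 := mul_pos hx hy1
    have hu12 : x * y1 < x * y2 := by
      apply mul_lt_mul_of_pos_left h12 hx
    have hS1 := Sb_pos (ν-1) (x*y1) hν1 hu1.le
    have hS2 := Sb_pos (ν-1) (x*y2) hν1 (hu1.trans hu12).le
    rw [div_lt_div_iff₀ hS1 hS2]
    have key := Sb_cross2 ν hν (x*y1) (x*y2) hu1 hu12
    have h2 : x * (y1 * Sb ν (x*y1) * Sb (ν-1) (x*y2))
        < x * (y2 * Sb ν (x*y2) * Sb (ν-1) (x*y1)) := by
      nlinarith [key]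
    exact lt_of_mul_lt_mul_left h2 hx.le
  · intro y hy
    have hGν : 0 < Real.Gamma ν := Real.Gamma_pos_of_pos hν0
    have hlim1 := Sb_tendsto ν (by linarith) y hy
    have hlim2 := Sb_tendsto (ν-1) hν1 y hy
    rw [show ν - 1 + 1 = ν by ring] at hlim2
    have hmain : Filter.Tendsto (fun x => y * Sb ν (x*y) / Sb (ν-1) (x*y))
        (nhdsWithin 0 (Set.Ioi 0)) (nhds (y * (Real.Gamma (ν+1))⁻¹ / (Real.Gamma ν)⁻¹)) := by
      apply Filter.Tendsto.div (hlim1.const_mul y) hlim2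
      exact inv_ne_zero hGν.ne'
    have heq : y * (Real.Gamma (ν+1))⁻¹ / (Real.Gamma ν)⁻¹ = y / ν := by
      rw [Real.Gamma_add_one hν0.ne']
      field_simp
    rw [heq] at hmain
    apply hmain.congr'
    filter_upwards [self_mem_nhdsWithin] with x hx
    exact (besselRatioC_eq ν x y hx hy).symm
end

section
/- Let x > 0 be fixed, ξ = 2√(xy), and define g(y) = x + y − √(1+4xy) + ln((1+√(1+4xy))/(2y)) for y > 0. Then g'(y) = (y − 2xy − 1 + (y−1)√(1+4xy)) / (y(1+√(1+4xy))), g(x+1) = g'(x+1) = 0, and g is convex on (0,∞); in particular g(y) ≥ 0 with equality only at y = x + 1. -/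
open Real Set

noncomputable def Gfun (x : ℝ) : ℝ → ℝ := fun y =>
  x + y - Real.sqrt (1 + 4 * x * y) +
    Real.log ((1 + Real.sqrt (1 + 4 * x * y)) / (2 * y))

lemma sqrt_gt_one (x : ℝ) (hx : 0 < x) {y : ℝ} (hy : 0 < y) :
    1 < Real.sqrt (1 + 4 * x * y) := by
  have h : (1:ℝ) < 1 + 4 * x * y := by nlinarith
  calc (1:ℝ) = Real.sqrt 1 := by simp
    _ < Real.sqrt (1 + 4 * x * y) := Real.sqrt_lt_sqrt (by norm_num) h

lemma Gfun_hasDeriv (x : ℝ) (hx : 0 < x) {y : ℝ} (hy : 0 < y) :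
    HasDerivAt (Gfun x)
      (1 - 2 * x / (1 + Real.sqrt (1 + 4 * x * y)) - 1 / y) y := by
  set s := Real.sqrt (1 + 4 * x * y) with hs
  have hpos : (0:ℝ) < 1 + 4 * x * y := by nlinarith
  have hs1 : 1 < s := sqrt_gt_one x hx hy
  have hs0 : 0 < s := by linarith
  have hsq : s ^ 2 = 1 + 4 * x * y := Real.sq_sqrt hpos.le
  have hinner : HasDerivAt (fun y : ℝ => 1 + 4 * x * y) (4 * x) y := by
    simpa using ((hasDerivAt_id y).const_mul (4 * x)).const_add 1
  have hsd : HasDerivAt (fun y : ℝ => Real.sqrt (1 + 4 * x * y))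
      (1 / (2 * s) * (4 * x)) y :=
    (Real.hasDerivAt_sqrt hpos.ne').comp y hinner
  have hnum : HasDerivAt (fun y : ℝ => 1 + Real.sqrt (1 + 4 * x * y))
      (1 / (2 * s) * (4 * x)) y := hsd.const_add 1
  have hden : HasDerivAt (fun y : ℝ => 2 * y) 2 y := by
    simpa using (hasDerivAt_id y).const_mul 2
  have hden0 : (2:ℝ) * y ≠ 0 := by positivity
  have hquot : HasDerivAt (fun y : ℝ => (1 + Real.sqrt (1 + 4 * x * y)) / (2 * y))
      ((1 / (2 * s) * (4 * x) * (2 * y) - (1 + s) * 2) / (2 * y) ^ 2) y :=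
    hnum.div hden hden0
  have hu0 : (1 + s) / (2 * y) ≠ 0 := by positivity
  have hlog : HasDerivAt (fun y : ℝ => Real.log ((1 + Real.sqrt (1 + 4 * x * y)) / (2 * y)))
      (((1 + s) / (2 * y))⁻¹ * ((1 / (2 * s) * (4 * x) * (2 * y) - (1 + s) * 2) / (2 * y) ^ 2)) y :=
    by have h := (Real.hasDerivAt_log hu0).comp y hquot; exact h
  have hfull : HasDerivAt (Gfun x) _ y := (((hasDerivAt_id y).const_add x).sub hsd).add hlog
  convert hfull using 1
  have hy0 : y ≠ 0 := hy.ne'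
  have hs0' : s ≠ 0 := hs0.ne'
  have h1s : (1:ℝ) + s ≠ 0 := by positivity
  field_simp
  ring

lemma Gfun_deriv (x : ℝ) (hx : 0 < x) {y : ℝ} (hy : 0 < y) :
    deriv (Gfun x) y = 1 - 2 * x / (1 + Real.sqrt (1 + 4 * x * y)) - 1 / y :=
  (Gfun_hasDeriv x hx hy).deriv

theorem g_properties (x : ℝ) (hx : 0 < x) :
    let g : ℝ → ℝ := fun y =>
      x + y - Real.sqrt (1 + 4 * x * y) +
        Real.log ((1 + Real.sqrt (1 + 4 * x * y)) / (2 * y))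
    (∀ y : ℝ, 0 < y → deriv g y =
        (y - 2 * x * y - 1 + (y - 1) * Real.sqrt (1 + 4 * x * y)) /
          (y * (1 + Real.sqrt (1 + 4 * x * y)))) ∧
    g (x + 1) = 0 ∧ deriv g (x + 1) = 0 ∧
    ConvexOn ℝ (Set.Ioi 0) g ∧
    ∀ y : ℝ, 0 < y → 0 ≤ g y ∧ (g y = 0 ↔ y = x + 1) := by
  intro g
  have hgG : g = Gfun x := rfl
  -- sqrt at x+1
  have hx1 : (0:ℝ) < x + 1 := by linarith
  have hsx1 : Real.sqrt (1 + 4 * x * (x + 1)) = 2 * x + 1 := by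
    rw [show 1 + 4 * x * (x + 1) = (2 * x + 1) ^ 2 by ring]
    exact Real.sqrt_sq (by linarith)
  -- deriv formula
  have hderiv : ∀ y : ℝ, 0 < y → deriv g y =
      (y - 2 * x * y - 1 + (y - 1) * Real.sqrt (1 + 4 * x * y)) /
        (y * (1 + Real.sqrt (1 + 4 * x * y))) := by
    intro y hy
    rw [hgG, Gfun_deriv x hx hy]
    have hs1 := sqrt_gt_one x hx hy
    have h1s : (0:ℝ) < 1 + Real.sqrt (1 + 4 * x * y) := by linarith
    field_simp
    ring
  have hderiv' : ∀ y : ℝ, 0 < y →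
      deriv g y = 1 - 2 * x / (1 + Real.sqrt (1 + 4 * x * y)) - 1 / y := by
    intro y hy; rw [hgG]; exact Gfun_deriv x hx hy
  have hgx1 : g (x + 1) = 0 := by
    show x + (x+1) - Real.sqrt (1 + 4*x*(x+1)) + Real.log ((1 + Real.sqrt (1+4*x*(x+1)))/(2*(x+1))) = 0
    rw [hsx1, show (1 + (2*x+1))/(2*(x+1)) = 1 by field_simp; ring]
    simp only [Real.log_one]
    ring
  have hdx1 : deriv g (x + 1) = 0 := by
    rw [hderiv' (x+1) hx1, hsx1]
    have : (0:ℝ) < 1 + (2*x+1) := by linarith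
    field_simp
    ring
  -- strict monotonicity of deriv
  have hmono : StrictMonoOn (deriv g) (Set.Ioi 0) := by
    intro a ha b hb hab
    simp only [Set.mem_Ioi] at ha hb
    rw [hderiv' a ha, hderiv' b hb]
    have hsa := sqrt_gt_one x hx ha
    have hsb := sqrt_gt_one x hx hb
    have hslt : Real.sqrt (1 + 4 * x * a) < Real.sqrt (1 + 4 * x * b) :=
      Real.sqrt_lt_sqrt (by nlinarith) (by nlinarith)
    have h1 : 2 * x / (1 + Real.sqrt (1 + 4 * x * b)) < 2 * x / (1 + Real.sqrt (1 + 4 * x * a)) := by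
      apply div_lt_div_of_pos_left (by linarith) (by linarith) (by linarith)
    have h2 : 1 / b < 1 / a := one_div_lt_one_div_of_lt ha hab
    linarith
  have hcont : ContinuousOn g (Set.Ioi 0) := fun y hy =>
    ((Gfun_hasDeriv x hx hy).continuousAt.continuousWithinAt :)
  have hsc : StrictConvexOn ℝ (Set.Ioi 0) g := by
    apply StrictMonoOn.strictConvexOn_of_deriv (convex_Ioi 0) hcont
    rwa [interior_Ioi]
  -- positivity
  have hpos : ∀ y : ℝ, 0 < y → y ≠ x + 1 → 0 < g y := by
    intro y hy hne
    rcases lt_or_gt_of_ne hne with h | h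
    · -- y < x+1 : use strict anti on Ioc 0 (x+1)
      have hanti : StrictAntiOn g (Set.Ioc 0 (x+1)) := by
        apply strictAntiOn_of_deriv_neg (convex_Ioc 0 (x+1))
          (hcont.mono (by intro z hz; exact hz.1))
        intro z hz
        rw [interior_Ioc] at hz
        have hz1 : (0:ℝ) < z := hz.1
        have := hmono (Set.mem_Ioi.mpr hz1) (Set.mem_Ioi.mpr hx1) hz.2
        rw [hdx1] at this
        linarith
      have := hanti ⟨hy, h.le⟩ ⟨hx1, le_refl _⟩ h
      rw [hgx1] at this; linarith
    · have hmono2 : StrictMonoOn g (Set.Ici (x+1)) := by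
        apply strictMonoOn_of_deriv_pos (convex_Ici (x+1))
          (hcont.mono (by intro z hz; simp only [Set.mem_Ici] at hz; exact Set.mem_Ioi.mpr (by linarith)))
        intro z hz
        rw [interior_Ici] at hz
        have hz1 : (0:ℝ) < z := lt_trans hx1 hz
        have := hmono (Set.mem_Ioi.mpr hx1) (Set.mem_Ioi.mpr hz1) hz
        rw [hdx1] at this
        linarith
      have := hmono2 (Set.self_mem_Ici) (Set.mem_Ici.mpr h.le) h
      rw [hgx1] at this; linarith
  refine ⟨hderiv, hgx1, hdx1, hsc.convexOn, ?_⟩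
  intro y hy
  by_cases hne : y = x + 1
  · subst hne; exact ⟨hgx1.ge, by simp [hgx1]⟩
  · have := hpos y hy hne
    exact ⟨this.le, by constructor <;> intro h <;> [exact absurd h (by linarith); exact absurd h hne]⟩
end

section
/- Let y > 0 be fixed and define f(x) = x + y − √(1+4xy) + ln((1+√(1+4xy))/(2y)) for x ≥ 0. Then f'(x) = (1 − 2y + √(1+4xy))/(1 + √(1+4xy)); if y < 1 then f is strictly increasing on (0,∞); if y > 1 then f has a unique minimum at x = y − 1 where f and f' both vanish, and f''(y−1) = 1/(2y−1). -/
set_option maxHeartbeats 1000000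


open Real Set

theorem f_properties (y : ℝ) (hy : 0 < y) :
    let f : ℝ → ℝ := fun x =>
      x + y - Real.sqrt (1 + 4 * x * y) +
        Real.log ((1 + Real.sqrt (1 + 4 * x * y)) / (2 * y))
    (∀ x : ℝ, 0 < x → deriv f x =
        (1 - 2 * y + Real.sqrt (1 + 4 * x * y)) / (1 + Real.sqrt (1 + 4 * x * y))) ∧
    (y < 1 → StrictMonoOn f (Set.Ioi 0)) ∧
    (1 < y → f (y - 1) = 0 ∧ deriv f (y - 1) = 0 ∧
      deriv (deriv f) (y - 1) = 1 / (2 * y - 1) ∧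
      ∀ x ∈ Set.Ici (0 : ℝ), x ≠ y - 1 → f (y - 1) < f x) := by
  intro f
  have h2y : (0:ℝ) < 2 * y := by positivity
  have h1s : ∀ x : ℝ, (0:ℝ) < 1 + Real.sqrt (1 + 4 * x * y) := fun x => by
    have := Real.sqrt_nonneg (1 + 4 * x * y); linarith
  -- continuity of f
  have hcont : Continuous f := by
    refine Continuous.add (by continuity) ?_
    refine continuous_iff_continuousAt.mpr fun x => ?_
    have h1 : Continuous fun x : ℝ => (1 + Real.sqrt (1 + 4 * x * y)) / (2 * y) := by
      continuity
    exact (Real.continuousAt_log (by positivity)).comp h1.continuousAt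
  -- derivative of the inner sqrt
  have hsd : ∀ x : ℝ, 0 < 1 + 4 * x * y →
      HasDerivAt (fun x : ℝ => Real.sqrt (1 + 4 * x * y))
        (2 * y / Real.sqrt (1 + 4 * x * y)) x := by
    intro x hx
    have hg : HasDerivAt (fun x : ℝ => 1 + 4 * x * y) (4 * y) x := by
      have : HasDerivAt (fun x : ℝ => 4 * x * y) (4 * y) x := by
        simpa using ((hasDerivAt_id x).const_mul (4:ℝ)).mul_const y
      simpa using this.const_add 1
    have := (Real.hasDerivAt_sqrt hx.ne').comp x hg
    refine this.congr_deriv ?_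
    have hspos : 0 < Real.sqrt (1 + 4 * x * y) := Real.sqrt_pos.mpr hx
    field_simp
    ring
  -- derivative of f
  have hF : ∀ x : ℝ, 0 < 1 + 4 * x * y →
      HasDerivAt f ((1 - 2 * y + Real.sqrt (1 + 4 * x * y)) /
        (1 + Real.sqrt (1 + 4 * x * y))) x := by
    intro x hx
    have hspos : 0 < Real.sqrt (1 + 4 * x * y) := Real.sqrt_pos.mpr hx
    have hfe : f = fun x : ℝ => x + y - Real.sqrt (1 + 4 * x * y) +
        (Real.log (1 + Real.sqrt (1 + 4 * x * y)) - Real.log (2 * y)) := by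
      funext t
      show _ + Real.log _ = _
      rw [Real.log_div (h1s t).ne' h2y.ne']
    rw [hfe]
    have hlog : HasDerivAt (fun x : ℝ => Real.log (1 + Real.sqrt (1 + 4 * x * y)))
        ((2 * y / Real.sqrt (1 + 4 * x * y)) / (1 + Real.sqrt (1 + 4 * x * y))) x :=
      HasDerivAt.log ((hsd x hx).const_add 1) (h1s x).ne'
    have hmain := (((hasDerivAt_id x).add_const y).sub (hsd x hx)).add
      (hlog.sub_const (Real.log (2 * y)))
    refine hmain.congr_deriv ?_
    have h1 := (h1s x).ne'
    have := hspos.ne'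
    generalize Real.sqrt (1 + 4 * x * y) = s at this h1 ⊢
    field_simp
    ring
  -- part 1
  have part1 : ∀ x : ℝ, 0 < x → deriv f x =
      (1 - 2 * y + Real.sqrt (1 + 4 * x * y)) / (1 + Real.sqrt (1 + 4 * x * y)) := by
    intro x hx
    exact (hF x (by nlinarith)).deriv
  refine ⟨part1, ?_, ?_⟩
  · -- y < 1 → strict mono on Ioi 0
    intro hy1
    apply strictMonoOn_of_deriv_pos (convex_Ioi 0) hcont.continuousOn
    intro x hx
    rw [interior_Ioi] at hx
    have hx' : 0 < 1 + 4 * x * y := by nlinarith [mem_Ioi.mp hx]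
    rw [(hF x hx').deriv]
    have hs1 : 1 < Real.sqrt (1 + 4 * x * y) := by
      nlinarith [Real.sq_sqrt hx'.le, Real.sqrt_nonneg (1 + 4 * x * y), mem_Ioi.mp hx]
    exact div_pos (by linarith) (h1s x)
  · -- 1 < y case
    intro hy1
    have ha : (0:ℝ) < 1 + 4 * (y - 1) * y := by nlinarith
    have hsa : Real.sqrt (1 + 4 * (y - 1) * y) = 2 * y - 1 := by
      rw [show 1 + 4 * (y - 1) * y = (2 * y - 1) ^ 2 by ring]
      exact Real.sqrt_sq (by linarith)
    have hfa : f (y - 1) = 0 := by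
      show y - 1 + y - _ + Real.log _ = 0
      rw [hsa, show (1 + (2 * y - 1)) / (2 * y) = 1 by field_simp; ring, Real.log_one]
      ring
    have hderiv0 : deriv f (y - 1) = 0 := by
      rw [(hF (y - 1) ha).deriv, hsa]
      norm_num
    -- strict mono / anti pieces
    have hanti : StrictAntiOn f (Icc 0 (y - 1)) := by
      apply strictAntiOn_of_deriv_neg (convex_Icc _ _) hcont.continuousOn
      intro x hx
      rw [interior_Icc] at hx
      obtain ⟨hx0, hx1⟩ := hx
      have hx' : 0 < 1 + 4 * x * y := by nlinarith
      rw [(hF x hx').deriv]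
      have hs : Real.sqrt (1 + 4 * x * y) < 2 * y - 1 := by
        nlinarith [Real.sq_sqrt hx'.le, Real.sqrt_nonneg (1 + 4 * x * y)]
      exact div_neg_of_neg_of_pos (by linarith) (h1s x)
    have hmono : StrictMonoOn f (Ici (y - 1)) := by
      apply strictMonoOn_of_deriv_pos (convex_Ici _) hcont.continuousOn
      intro x hx
      rw [interior_Ici] at hx
      have hx1 : y - 1 < x := mem_Ioi.mp hx
      have hx' : 0 < 1 + 4 * x * y := by nlinarith
      rw [(hF x hx').deriv]
      have hs : 2 * y - 1 < Real.sqrt (1 + 4 * x * y) := by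
        nlinarith [Real.sq_sqrt hx'.le, Real.sqrt_nonneg (1 + 4 * x * y)]
      exact div_pos (by linarith) (h1s x)
    -- second derivative
    have hderiv2 : deriv (deriv f) (y - 1) = 1 / (2 * y - 1) := by
      have hFd : HasDerivAt (fun x : ℝ => 1 - 2 * y / (1 + Real.sqrt (1 + 4 * x * y)))
          (4 * y ^ 2 / (Real.sqrt (1 + 4 * (y - 1) * y) *
            (1 + Real.sqrt (1 + 4 * (y - 1) * y)) ^ 2)) (y - 1) := by
        have hspos : 0 < Real.sqrt (1 + 4 * (y - 1) * y) := Real.sqrt_pos.mpr ha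
        have hdiv := ((hasDerivAt_const (y - 1) (2 * y)).div
          ((hsd (y - 1) ha).const_add 1) (h1s (y - 1)).ne')
        have := hdiv.const_sub 1
        refine this.congr_deriv ?_
        field_simp
        ring
      have heq : deriv f =ᶠ[nhds (y - 1)]
          (fun x : ℝ => 1 - 2 * y / (1 + Real.sqrt (1 + 4 * x * y))) := by
        have hopen : IsOpen {x : ℝ | 0 < 1 + 4 * x * y} :=
          isOpen_lt continuous_const (continuous_const.add ((continuous_const.mul continuous_id).mul continuous_const))
        filter_upwards [hopen.mem_nhds ha] with x hx
        rw [(hF x hx).deriv]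
        have := (h1s x).ne'
        field_simp
        ring
      rw [heq.deriv_eq, hFd.deriv, hsa]
      have h2y1 : (0:ℝ) < 2 * y - 1 := by linarith
      rw [show 1 + (2 * y - 1) = 2 * y by ring]
      field_simp
      ring
    refine ⟨hfa, hderiv0, hderiv2, ?_⟩
    intro x hx hne
    rcases lt_or_gt_of_ne hne with h | h
    · exact hanti ⟨mem_Ici.mp hx, h.le⟩ (right_mem_Icc.mpr (by linarith [mem_Ici.mp hx])) h
    · exact hmono self_mem_Ici (mem_Ici.mpr h.le) h
end
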